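/- arXiv:2107.06965 — 7 statements merged into one kernel-verified Lean document; each statement's English description precedes it below -/
import Mathlib

section
/- Let u ∈ C²([0,1]) satisfy −u''(x) = f(x) for all x ∈ (0,1) with u(0) = u(1) = 0, where f : [0,1] → ℝ is continuous. Then for every j with 1 ≤ j ≤ n−1, the dual-vector component satisfies ∫₀¹ f(x)φ_j(x) dx = −(1/h_j)·u(x_{j−1}) + (1/h_j + 1/h_{j+1})·u(x_j) − (1/h_{j+1})·u(x_{j+1}). -/
set_option maxHeartbeats 1000000

open MeasureTheory

/-- The hat (nodal basis) function `φ_j` associated with the nodes `x`. -/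
noncomputable def hatFn (x : ℕ → ℝ) (j : ℕ) : ℝ → ℝ := fun t =>
  if x (j - 1) ≤ t ∧ t ≤ x j then (t - x (j - 1)) / (x j - x (j - 1))
  else if x j ≤ t ∧ t ≤ x (j + 1) then (x (j + 1) - t) / (x (j + 1) - x j)
  else 0

private lemma ibp_aux (u u' u'' : ℝ → ℝ) (a b p q : ℝ) (hab : a ≤ b)
    (h0 : (0:ℝ) ≤ a) (h1 : b ≤ 1)
    (hu1 : ∀ t ∈ Set.Icc (0:ℝ) 1, HasDerivWithinAt u (u' t) (Set.Icc 0 1) t)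
    (hu2 : ∀ t ∈ Set.Icc (0:ℝ) 1, HasDerivWithinAt u' (u'' t) (Set.Icc 0 1) t)
    (hu2c : ContinuousOn u'' (Set.Icc (0:ℝ) 1)) :
    ∫ t in a..b, u'' t * (p * t + q) =
      (u' b * (p * b + q) - p * u b) - (u' a * (p * a + q) - p * u a) := by
  have hsub : Set.Icc a b ⊆ Set.Icc (0:ℝ) 1 := Set.Icc_subset_Icc h0 h1
  have hcu : ContinuousOn u (Set.Icc (0:ℝ) 1) :=
    fun t ht => (hu1 t ht).continuousWithinAt
  have hcu' : ContinuousOn u' (Set.Icc (0:ℝ) 1) :=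
    fun t ht => (hu2 t ht).continuousWithinAt
  apply intervalIntegral.integral_eq_sub_of_hasDeriv_right_of_le hab
  · exact ((hcu'.mono hsub).mul (by fun_prop)).sub ((hcu.mono hsub).const_smul p)
  · intro t ht
    have ht01 : t ∈ Set.Ioo (0:ℝ) 1 := ⟨lt_of_le_of_lt h0 ht.1, lt_of_lt_of_le ht.2 h1⟩
    have hnhds : Set.Icc (0:ℝ) 1 ∈ nhds t := Icc_mem_nhds ht01.1 ht01.2
    have hd1 : HasDerivAt u (u' t) t :=
      (hu1 t (Set.Ioo_subset_Icc_self ht01)).hasDerivAt hnhds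
    have hd2 : HasDerivAt u' (u'' t) t :=
      (hu2 t (Set.Ioo_subset_Icc_self ht01)).hasDerivAt hnhds
    have hlin : HasDerivAt (fun s => p * s + q) p t := by
      simpa using ((hasDerivAt_id t).const_mul p).add_const q
    have : HasDerivAt (fun s => u' s * (p * s + q) - p * u s)
        (u'' t * (p * t + q)) t := by
      have := (hd2.mul hlin).sub (hd1.const_mul p)
      refine this.congr_deriv ?_
      ring
    exact this.hasDerivWithinAt
  · apply ContinuousOn.intervalIntegrable
    rw [Set.uIcc_of_le hab]
    exact (hu2c.mono hsub).mul (by fun_prop)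

theorem stmt0
    (n : ℕ) (hn : 2 ≤ n)
    (x : ℕ → ℝ) (hx0 : x 0 = 0) (hxn : x n = 1)
    (hmono : ∀ i, i < n → x i < x (i + 1))
    (u u' u'' f : ℝ → ℝ)
    (hu1 : ∀ t ∈ Set.Icc (0:ℝ) 1, HasDerivWithinAt u (u' t) (Set.Icc 0 1) t)
    (hu2 : ∀ t ∈ Set.Icc (0:ℝ) 1, HasDerivWithinAt u' (u'' t) (Set.Icc 0 1) t)
    (hu2c : ContinuousOn u'' (Set.Icc (0:ℝ) 1))
    (hf : ContinuousOn f (Set.Icc (0:ℝ) 1))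
    (hode : ∀ t ∈ Set.Ioo (0:ℝ) 1, -u'' t = f t)
    (hubc0 : u 0 = 0) (hubc1 : u 1 = 0) :
    ∀ j, 1 ≤ j → j ≤ n - 1 →
      ∫ t in (0:ℝ)..1, f t * hatFn x j t =
        -(1 / (x j - x (j - 1))) * u (x (j - 1))
        + (1 / (x j - x (j - 1)) + 1 / (x (j + 1) - x j)) * u (x j)
        - (1 / (x (j + 1) - x j)) * u (x (j + 1)) := by
  intro j hj1 hj2
  -- monotonicity of nodes
  have hmono' : ∀ i k, i ≤ k → k ≤ n → x i ≤ x k := by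
    intro i k hik hkn
    induction k with
    | zero => simpa [Nat.le_zero.mp hik]
    | succ m ih =>
      rcases Nat.lt_or_ge i (m+1) with h | h
      · exact le_trans (ih (Nat.lt_succ_iff.mp h) (le_trans (Nat.le_succ m) hkn))
          (le_of_lt (hmono m (Nat.lt_of_succ_le hkn)))
      · have : i = m + 1 := le_antisymm hik h
        simp [this]
  set a := x (j - 1) with ha
  set b := x j with hb
  set c := x (j + 1) with hc
  have hjn : j + 1 ≤ n := by omega
  have hjlt : j < n := by omega
  have hj1n : j - 1 < n := by omega
  have hab : a < b := by
    have := hmono (j-1) hj1n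
    rwa [Nat.sub_add_cancel hj1] at this
  have hbc : b < c := hmono j hjlt
  have h0a : (0:ℝ) ≤ a := by rw [← hx0]; exact hmono' 0 (j-1) (Nat.zero_le _) (by omega)
  have hc1 : c ≤ 1 := by rw [← hxn]; exact hmono' (j+1) n hjn le_rfl
  have h0b : (0:ℝ) ≤ b := le_trans h0a hab.le
  have hb1 : b ≤ 1 := le_trans hbc.le hc1
  have hba : b - a ≠ 0 := by linarith
  have hcb : c - b ≠ 0 := by linarith
  have hba' : (0:ℝ) < b - a := by linarith
  have hcb' : (0:ℝ) < c - b := by linarith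
  -- hatFn is a max/min of affine functions, hence continuous
  have hhat : hatFn x j = fun t => max 0 (min ((t - a) / (b - a)) ((c - t) / (c - b))) := by
    funext t
    unfold hatFn
    rw [← ha, ← hb, ← hc]
    split_ifs with h1 h2
    · have hp : (0:ℝ) ≤ (t - a) / (b - a) := div_nonneg (by linarith [h1.1]) hba'.le
      have hpq : (t - a) / (b - a) ≤ (c - t) / (c - b) := by
        rw [div_le_div_iff₀ hba' hcb']
        nlinarith [h1.2]
      rw [min_eq_left hpq, max_eq_right hp]
    · have hq : (0:ℝ) ≤ (c - t) / (c - b) := div_nonneg (by linarith [h2.2]) hcb'.le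
      have hqp : (c - t) / (c - b) ≤ (t - a) / (b - a) := by
        rw [div_le_div_iff₀ hcb' hba']
        have hbt : b ≤ t := h2.1
        nlinarith
      rw [min_eq_right hqp, max_eq_right hq]
    · have : t < a ∨ c < t := by
        by_contra hcon
        push_neg at hcon
        rcases le_or_gt t b with h | h
        · exact h1 ⟨hcon.1, h⟩
        · exact h2 ⟨h.le, hcon.2⟩
      have hminneg : min ((t - a) / (b - a)) ((c - t) / (c - b)) ≤ 0 := by
        rcases this with h | h
        · exact le_trans (min_le_left _ _) (div_nonpos_of_nonpos_of_nonneg (by linarith) hba'.le)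
        · exact le_trans (min_le_right _ _) (div_nonpos_of_nonpos_of_nonneg (by linarith) hcb'.le)
      rw [max_eq_left hminneg]
  have hhatc : Continuous (hatFn x j) := by
    rw [hhat]
    fun_prop
  -- integrability helper
  have hint : ∀ s r : ℝ, (0:ℝ) ≤ s → s ≤ r → r ≤ 1 →
      IntervalIntegrable (fun t => f t * hatFn x j t) volume s r := by
    intro s r h0s hsr hr1
    apply ContinuousOn.intervalIntegrable
    rw [Set.uIcc_of_le hsr]
    exact ((hf.mono (Set.Icc_subset_Icc h0s hr1)).mul hhatc.continuousOn)
  -- split the integral at a, b, c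
  have iA := hint 0 a le_rfl h0a (le_trans hab.le hb1)
  have iAB := hint a b h0a hab.le hb1
  have iBC := hint b c h0b hbc.le hc1
  have iC1 := hint c 1 (le_trans h0b hbc.le) hc1 le_rfl
  have e1 := intervalIntegral.integral_add_adjacent_intervals iA iAB
  have e2 := intervalIntegral.integral_add_adjacent_intervals (iA.trans iAB) iBC
  have e3 := intervalIntegral.integral_add_adjacent_intervals ((iA.trans iAB).trans iBC) iC1
  have hsplit : ∫ t in (0:ℝ)..1, f t * hatFn x j t =
      (∫ t in (0:ℝ)..a, f t * hatFn x j t) + (∫ t in a..b, f t * hatFn x j t)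
      + (∫ t in b..c, f t * hatFn x j t) + (∫ t in c..(1:ℝ), f t * hatFn x j t) := by
    linarith [e1, e2, e3]
  -- vanishing pieces
  have hz1 : ∫ t in (0:ℝ)..a, f t * hatFn x j t = 0 := by
    rw [intervalIntegral.integral_congr (g := fun _ => (0:ℝ))]
    · simp
    · intro t ht
      rw [Set.uIcc_of_le h0a] at ht
      simp only [hatFn]
      rw [← ha, ← hb, ← hc]
      split_ifs with h1 h2
      · have : t = a := le_antisymm ht.2 h1.1
        simp [this]
      · exfalso; linarith [ht.2, h2.1]
      · simp
  have hz2 : ∫ t in c..(1:ℝ), f t * hatFn x j t = 0 := by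
    rw [intervalIntegral.integral_congr (g := fun _ => (0:ℝ))]
    · simp
    · intro t ht
      rw [Set.uIcc_of_le hc1] at ht
      simp only [hatFn]
      rw [← ha, ← hb, ← hc]
      split_ifs with h1 h2
      · exfalso; linarith [ht.1, h1.2]
      · have : t = c := le_antisymm h2.2 ht.1
        simp [this]
      · simp
  -- middle pieces: rewrite integrand
  have hm1 : ∫ t in a..b, f t * hatFn x j t = (b-a)⁻¹ * ∫ t in a..b, f t * (t - a) := by
    rw [← intervalIntegral.integral_const_mul]
    apply intervalIntegral.integral_congr
    intro t ht
    rw [Set.uIcc_of_le hab.le] at ht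
    simp only [hatFn]
    rw [← ha, ← hb, ← hc]
    rw [if_pos ⟨ht.1, ht.2⟩]
    field_simp
  have hm2 : ∫ t in b..c, f t * hatFn x j t = (c-b)⁻¹ * ∫ t in b..c, f t * (c - t) := by
    rw [← intervalIntegral.integral_const_mul]
    apply intervalIntegral.integral_congr
    intro t ht
    rw [Set.uIcc_of_le hbc.le] at ht
    simp only [hatFn]
    rw [← ha, ← hb, ← hc]
    by_cases htb : t ≤ b
    · have : t = b := le_antisymm htb ht.1
      subst this
      rw [if_pos ⟨hab.le, le_rfl⟩, div_self hba]
      field_simp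
    · rw [if_neg (by tauto), if_pos ⟨ht.1, ht.2⟩]
      field_simp
  -- replace f by -u'' a.e.
  have hae : ∀ s r : ℝ, (0:ℝ) ≤ s → s ≤ r → r ≤ 1 → ∀ g : ℝ → ℝ,
      ∫ t in s..r, f t * g t = ∫ t in s..r, -u'' t * g t := by
    intro s r h0s hsr hr1 g
    apply intervalIntegral.integral_congr_ae
    have h0 : ∀ᵐ t : ℝ, t ≠ 0 := by
      simpa [ae_iff] using Real.volume_singleton (a := (0:ℝ))
    have h1' : ∀ᵐ t : ℝ, t ≠ 1 := by
      simpa [ae_iff] using Real.volume_singleton (a := (1:ℝ))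
    filter_upwards [h0, h1'] with t ht0 ht1 htmem
    rw [Set.uIoc_of_le hsr] at htmem
    have : t ∈ Set.Ioo (0:ℝ) 1 := by
      constructor
      · exact lt_of_le_of_ne (le_trans h0s htmem.1.le) (Ne.symm ht0)
      · exact lt_of_le_of_ne (le_trans htmem.2 hr1) ht1
    rw [← hode t this]
  -- IBP computations
  have hi1 : ∫ t in a..b, f t * (t - a) = -(u' b * (b - a) - u b + u a) := by
    rw [hae a b h0a hab.le hb1]
    have : ∀ t, -u'' t * (t - a) = -(u'' t * (1 * t + (-a))) := by intro t; ring
    simp_rw [this]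
    rw [intervalIntegral.integral_neg,
      ibp_aux u u' u'' a b 1 (-a) hab.le h0a hb1 hu1 hu2 hu2c]
    ring
  have hi2 : ∫ t in b..c, f t * (c - t) = -(u c - u b - u' b * (c - b)) := by
    rw [hae b c h0b hbc.le hc1]
    have : ∀ t, -u'' t * (c - t) = -(u'' t * ((-1) * t + c)) := by intro t; ring
    simp_rw [this]
    rw [intervalIntegral.integral_neg,
      ibp_aux u u' u'' b c (-1) c hbc.le h0b hc1 hu1 hu2 hu2c]
    ring
  rw [hsplit, hz1, hz2, hm1, hm2, hi1, hi2]
  field_simp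
  ring
end

section
/- Let u ∈ C²([0,1]) satisfy −u''(x) = f(x) for all x ∈ (0,1) with u(0) = u(1) = 0, where f : [0,1] → ℝ is continuous. Let F ∈ ℝ^{n−1} be the dual vector with components F_j = ∫₀¹ f(x)φ_j(x) dx. Then the vector ũ = (u(x_1), …, u(x_{n−1}))ᵀ is the unique solution of the linear system S ũ = F; in other words, the coefficient vector of the finite element solution of the system S u = F coincides with the vector of nodal values of u (the finite element solution equals the linear interpolant of u). -/
open MeasureTheory

lemma ftcL (u u' u'' : ℝ → ℝ)
    (hu1 : ∀ t ∈ Set.Icc (0:ℝ) 1, HasDerivWithinAt u (u' t) (Set.Icc 0 1) t)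
    (hu2 : ∀ t ∈ Set.Icc (0:ℝ) 1, HasDerivWithinAt u' (u'' t) (Set.Icc 0 1) t)
    (hu2c : ContinuousOn u'' (Set.Icc (0:ℝ) 1))
    (a b : ℝ) (ha : 0 ≤ a) (hb : b ≤ 1) (hab : a < b) :
    ∫ t in a..b, -u'' t * ((t - a)/(b - a)) = (u b - u a)/(b-a) - u' b := by
  have hsub : Set.Icc a b ⊆ Set.Icc (0:ℝ) 1 := Set.Icc_subset_Icc ha hb
  have hba : b - a ≠ 0 := by linarith
  set G : ℝ → ℝ := fun t => (u t - u' t * (t - a))/(b-a) with hG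
  have hcont : ContinuousOn G (Set.Icc a b) := by
    apply ContinuousOn.div_const
    apply ContinuousOn.sub
    · exact fun t ht => ((hu1 t (hsub ht)).continuousWithinAt).mono hsub
    · exact ContinuousOn.mul (fun t ht => ((hu2 t (hsub ht)).continuousWithinAt).mono hsub)
        (by fun_prop)
  have hderiv : ∀ t ∈ Set.Ioo a b, HasDerivWithinAt G (-u'' t * ((t - a)/(b - a))) (Set.Ioi t) t := by
    intro t ht
    have ht01 : t ∈ Set.Ioo (0:ℝ) 1 := ⟨lt_of_le_of_lt ha ht.1, lt_of_lt_of_le ht.2 hb⟩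
    have hnhds : Set.Icc (0:ℝ) 1 ∈ nhds t := Icc_mem_nhds ht01.1 ht01.2
    have h1 : HasDerivAt u (u' t) t := (hu1 t (Set.Ioo_subset_Icc_self ht01)).hasDerivAt hnhds
    have h2 : HasDerivAt u' (u'' t) t := (hu2 t (Set.Ioo_subset_Icc_self ht01)).hasDerivAt hnhds
    have : HasDerivAt G (-u'' t * ((t - a)/(b - a))) t := by
      have := ((h1.sub (h2.mul ((hasDerivAt_id t).sub_const a))).div_const (b-a))
      exact this.congr_deriv (by simp only [id_eq]; ring)
    exact this.hasDerivWithinAt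
  have hint : IntervalIntegrable (fun t => -u'' t * ((t - a)/(b - a))) volume a b := by
    apply ContinuousOn.intervalIntegrable
    rw [Set.uIcc_of_le hab.le]
    exact ((hu2c.mono hsub).neg.mul (by fun_prop))
  have := intervalIntegral.integral_eq_sub_of_hasDeriv_right_of_le hab.le hcont hderiv hint
  rw [this, hG]
  simp only
  field_simp
  ring

lemma ftcR (u u' u'' : ℝ → ℝ)
    (hu1 : ∀ t ∈ Set.Icc (0:ℝ) 1, HasDerivWithinAt u (u' t) (Set.Icc 0 1) t)
    (hu2 : ∀ t ∈ Set.Icc (0:ℝ) 1, HasDerivWithinAt u' (u'' t) (Set.Icc 0 1) t)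
    (hu2c : ContinuousOn u'' (Set.Icc (0:ℝ) 1))
    (a b : ℝ) (ha : 0 ≤ a) (hb : b ≤ 1) (hab : a < b) :
    ∫ t in a..b, -u'' t * ((b - t)/(b - a)) = (u a - u b)/(b-a) + u' a := by
  have hsub : Set.Icc a b ⊆ Set.Icc (0:ℝ) 1 := Set.Icc_subset_Icc ha hb
  have hba : b - a ≠ 0 := by linarith
  set G : ℝ → ℝ := fun t => (-(u' t * (b - t)) - u t)/(b-a) with hG
  have hcont : ContinuousOn G (Set.Icc a b) := by
    apply ContinuousOn.div_const
    apply ContinuousOn.sub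
    · exact (ContinuousOn.mul (fun t ht => ((hu2 t (hsub ht)).continuousWithinAt).mono hsub)
        (by fun_prop)).neg
    · exact fun t ht => ((hu1 t (hsub ht)).continuousWithinAt).mono hsub
  have hderiv : ∀ t ∈ Set.Ioo a b, HasDerivWithinAt G (-u'' t * ((b - t)/(b - a))) (Set.Ioi t) t := by
    intro t ht
    have ht01 : t ∈ Set.Ioo (0:ℝ) 1 := ⟨lt_of_le_of_lt ha ht.1, lt_of_lt_of_le ht.2 hb⟩
    have hnhds : Set.Icc (0:ℝ) 1 ∈ nhds t := Icc_mem_nhds ht01.1 ht01.2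
    have h1 : HasDerivAt u (u' t) t := (hu1 t (Set.Ioo_subset_Icc_self ht01)).hasDerivAt hnhds
    have h2 : HasDerivAt u' (u'' t) t := (hu2 t (Set.Ioo_subset_Icc_self ht01)).hasDerivAt hnhds
    have : HasDerivAt G (-u'' t * ((b - t)/(b - a))) t := by
      have := ((((h2.mul ((hasDerivAt_const t b).sub (hasDerivAt_id t))).neg).sub h1).div_const (b-a))
      exact this.congr_deriv (by simp only [Pi.sub_apply, id_eq]; ring)
    exact this.hasDerivWithinAt
  have hint : IntervalIntegrable (fun t => -u'' t * ((b - t)/(b - a))) volume a b := by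
    apply ContinuousOn.intervalIntegrable
    rw [Set.uIcc_of_le hab.le]
    exact ((hu2c.mono hsub).neg.mul (by fun_prop))
  have := intervalIntegral.integral_eq_sub_of_hasDeriv_right_of_le hab.le hcont hderiv hint
  rw [this, hG]
  simp only
  field_simp
  ring

/-- The `(n-1) × (n-1)` tridiagonal stiffness matrix; the interior index `i : Fin (n-1)`
corresponds to the node `x (i+1)`, and `h_j = x j - x (j-1)`. -/
noncomputable def stiff (n : ℕ) (x : ℕ → ℝ) :
    Matrix (Fin (n - 1)) (Fin (n - 1)) ℝ := fun i j =>
  if (i : ℕ) = (j : ℕ) then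
    1 / (x ((i : ℕ) + 1) - x (i : ℕ)) + 1 / (x ((i : ℕ) + 2) - x ((i : ℕ) + 1))
  else if (j : ℕ) = (i : ℕ) + 1 then -(1 / (x ((i : ℕ) + 2) - x ((i : ℕ) + 1)))
  else if (i : ℕ) = (j : ℕ) + 1 then -(1 / (x ((i : ℕ) + 1) - x (i : ℕ)))
  else 0

lemma stiff_entry (n : ℕ) (x : ℕ → ℝ) (w : Fin (n-1) → ℝ) (i : Fin (n-1)) :
    (stiff n x).mulVec w i =
      (1 / (x ((i:ℕ)+1) - x (i:ℕ)) + 1 / (x ((i:ℕ)+2) - x ((i:ℕ)+1))) * w i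
      + (if h : (i:ℕ)+1 < n-1 then -(1 / (x ((i:ℕ)+2) - x ((i:ℕ)+1))) * w ⟨(i:ℕ)+1, h⟩ else 0)
      + (if h : 0 < (i:ℕ) then -(1 / (x ((i:ℕ)+1) - x (i:ℕ))) * w ⟨(i:ℕ)-1, by omega⟩ else 0) := by
  have key : ∀ j : Fin (n-1), stiff n x i j * w j =
      (if i = j then (1 / (x ((i:ℕ)+1) - x (i:ℕ)) + 1 / (x ((i:ℕ)+2) - x ((i:ℕ)+1))) * w j else 0)
      + (if (j:ℕ) = (i:ℕ)+1 then -(1 / (x ((i:ℕ)+2) - x ((i:ℕ)+1))) * w j else 0)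
      + (if (i:ℕ) = (j:ℕ)+1 then -(1 / (x ((i:ℕ)+1) - x (i:ℕ))) * w j else 0) := by
    intro j
    simp only [stiff, ← Fin.val_inj]
    split_ifs <;> first | omega | ring
  unfold Matrix.mulVec dotProduct
  rw [Finset.sum_congr rfl (fun j _ => key j)]
  rw [Finset.sum_add_distrib, Finset.sum_add_distrib, Finset.sum_ite_eq]
  congr 1
  congr 1
  · simp
  · by_cases h : (i:ℕ)+1 < n-1
    · rw [dif_pos h]
      have : ∀ j : Fin (n-1), ((j:ℕ) = (i:ℕ)+1) ↔ j = ⟨(i:ℕ)+1, h⟩ := by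
        intro j; rw [Fin.ext_iff]
      simp_rw [this]
      rw [Finset.sum_ite_eq' Finset.univ]
      simp
    · rw [dif_neg h]
      apply Finset.sum_eq_zero
      intro j _
      rw [if_neg]
      omega
  · by_cases h : 0 < (i:ℕ)
    · rw [dif_pos h]
      have : ∀ j : Fin (n-1), ((i:ℕ) = (j:ℕ)+1) ↔ j = ⟨(i:ℕ)-1, by omega⟩ := by
        intro j; rw [Fin.ext_iff]; simp; omega
      simp_rw [this]
      rw [Finset.sum_ite_eq' Finset.univ]
      simp
    · rw [dif_neg h]
      apply Finset.sum_eq_zero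
      intro j _
      rw [if_neg]
      omega

theorem stmt2
    (n : ℕ) (hn : 2 ≤ n)
    (x : ℕ → ℝ) (hx0 : x 0 = 0) (hxn : x n = 1)
    (hmono : ∀ i, i < n → x i < x (i + 1))
    (u u' u'' f : ℝ → ℝ)
    (hu1 : ∀ t ∈ Set.Icc (0:ℝ) 1, HasDerivWithinAt u (u' t) (Set.Icc 0 1) t)
    (hu2 : ∀ t ∈ Set.Icc (0:ℝ) 1, HasDerivWithinAt u' (u'' t) (Set.Icc 0 1) t)
    (hu2c : ContinuousOn u'' (Set.Icc (0:ℝ) 1))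
    (hf : ContinuousOn f (Set.Icc (0:ℝ) 1))
    (hode : ∀ t ∈ Set.Ioo (0:ℝ) 1, -u'' t = f t)
    (hubc0 : u 0 = 0) (hubc1 : u 1 = 0)
    (F : Fin (n - 1) → ℝ)
    (hF : ∀ j : Fin (n - 1), F j = ∫ t in (0:ℝ)..1, f t * hatFn x ((j : ℕ) + 1) t) :
    (stiff n x).mulVec (fun j : Fin (n - 1) => u (x ((j : ℕ) + 1))) = F ∧
      ∀ v : Fin (n - 1) → ℝ, (stiff n x).mulVec v = F →
        v = fun j : Fin (n - 1) => u (x ((j : ℕ) + 1)) := by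
  -- monotonicity of nodes
  have hlt : ∀ b ≤ n, ∀ a < b, x a < x b := by
    intro b hb
    induction b with
    | zero => omega
    | succ m ih =>
      intro a ha
      have hm : x m < x (m+1) := hmono m (by omega)
      rcases Nat.lt_succ_iff_lt_or_eq.mp ha with h | h
      · exact (ih (by omega) a h).trans hm
      · subst h; exact hm
  have hle : ∀ b ≤ n, ∀ a ≤ b, x a ≤ x b := by
    intro b hb a ha
    rcases lt_or_eq_of_le ha with h | h
    · exact (hlt b hb a h).le
    · subst h; exact le_rfl
  -- the key integral identity
  have key : ∀ i : Fin (n-1),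
      (∫ t in (0:ℝ)..1, f t * hatFn x ((i:ℕ)+1) t) =
        (1 / (x ((i:ℕ)+1) - x (i:ℕ)) + 1 / (x ((i:ℕ)+2) - x ((i:ℕ)+1))) * u (x ((i:ℕ)+1))
        - (1 / (x ((i:ℕ)+2) - x ((i:ℕ)+1))) * u (x ((i:ℕ)+2))
        - (1 / (x ((i:ℕ)+1) - x (i:ℕ))) * u (x (i:ℕ)) := by
    intro i
    have hi2 : (i:ℕ) + 2 ≤ n := by have := i.isLt; omega
    have h0i : (0:ℝ) ≤ x (i:ℕ) := by
      rw [← hx0]; exact hle (i:ℕ) (by omega) 0 (by omega)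
    have h1lt : x (i:ℕ) < x ((i:ℕ)+1) := hmono _ (by omega)
    have h2lt : x ((i:ℕ)+1) < x ((i:ℕ)+2) := hmono _ (by omega)
    have h2le1 : x ((i:ℕ)+2) ≤ 1 := by rw [← hxn]; exact hle n le_rfl _ hi2
    have h1le1 : x ((i:ℕ)+1) ≤ 1 := by linarith
    have h0i1 : (0:ℝ) ≤ x ((i:ℕ)+1) := by linarith
    set a : ℝ := x (i:ℕ)
    set b : ℝ := x ((i:ℕ)+1)
    set c : ℝ := x ((i:ℕ)+2)
    set g : ℝ → ℝ := fun t => f t * hatFn x ((i:ℕ)+1) t with hg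
    -- pointwise descriptions of g on the four pieces
    have e1 : Set.EqOn g (fun _ => (0:ℝ)) (Set.uIcc 0 a) := by
      rw [Set.uIcc_of_le h0i]
      intro t ht
      simp only [hg, hatFn, Nat.add_sub_cancel]
      split_ifs with hc1 hc2
      · have : t = a := le_antisymm ht.2 hc1.1
        rw [this]; simp; exact Or.inr (Or.inl (sub_self _))
      · exfalso; have := ht.2; have := hc2.1; exact lt_irrefl _ (lt_of_lt_of_le h1lt (hc2.1.trans ht.2))
      · simp
    have e2 : Set.EqOn g (fun t => f t * ((t - a)/(b - a))) (Set.uIcc a b) := by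
      rw [Set.uIcc_of_le h1lt.le]
      intro t ht
      simp only [hg, hatFn, Nat.add_sub_cancel]
      rw [if_pos ⟨ht.1, ht.2⟩]
    have e3 : Set.EqOn g (fun t => f t * ((c - t)/(c - b))) (Set.uIcc b c) := by
      rw [Set.uIcc_of_le h2lt.le]
      intro t ht
      simp only [hg, hatFn, Nat.add_sub_cancel]
      split_ifs with hc1 hc2
      · have htb : t = b := le_antisymm hc1.2 ht.1
        rw [htb]
        rw [div_self (by linarith), div_self (by linarith)]
      · rfl
      · exact absurd ⟨ht.1, ht.2⟩ hc2
    have e4 : Set.EqOn g (fun _ => (0:ℝ)) (Set.uIcc c 1) := by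
      rw [Set.uIcc_of_le h2le1]
      intro t ht
      simp only [hg, hatFn, Nat.add_sub_cancel]
      split_ifs with hc1 hc2
      · exfalso; have := hc1.2; have := ht.1; exact lt_irrefl _ (lt_of_lt_of_le h2lt (ht.1.trans hc1.2))
      · have : t = c := le_antisymm hc2.2 ht.1
        rw [this]; simp; exact Or.inr (Or.inl (sub_self _))
      · simp
    -- a.e. equality helper
    have aeeq : ∀ {p q : ℝ} {g1 g2 : ℝ → ℝ}, Set.EqOn g1 g2 (Set.uIcc p q) →
        g1 =ᶠ[ae (volume.restrict (Set.uIoc p q))] g2 := by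
      intro p q g1 g2 h
      exact Filter.eventually_of_mem (self_mem_ae_restrict measurableSet_uIoc)
        (fun t ht => h (Set.uIoc_subset_uIcc ht))
    -- integrability on each piece
    have hfc : ∀ {p q : ℝ}, 0 ≤ p → q ≤ 1 → p ≤ q → ContinuousOn f (Set.uIcc p q) := by
      intro p q hp hq hpq
      rw [Set.uIcc_of_le hpq]
      exact hf.mono (Set.Icc_subset_Icc hp hq)
    have I1 : IntervalIntegrable g volume 0 a :=
      (intervalIntegrable_const (c := (0:ℝ))).congr_ae (aeeq e1).symm
    have I2 : IntervalIntegrable g volume a b := by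
      refine IntervalIntegrable.congr_ae ?_ (aeeq e2).symm
      exact (ContinuousOn.mul (hfc h0i h1le1 h1lt.le) (by fun_prop)).intervalIntegrable
    have I3 : IntervalIntegrable g volume b c := by
      refine IntervalIntegrable.congr_ae ?_ (aeeq e3).symm
      exact (ContinuousOn.mul (hfc h0i1 h2le1 h2lt.le) (by fun_prop)).intervalIntegrable
    have I4 : IntervalIntegrable g volume c 1 :=
      (intervalIntegrable_const (c := (0:ℝ))).congr_ae (aeeq e4).symm
    -- decompose the integral
    have hsplit : (∫ t in (0:ℝ)..1, g t) =
        (∫ t in (0:ℝ)..a, g t) + (∫ t in a..b, g t) + (∫ t in b..c, g t) + (∫ t in c..(1:ℝ), g t) := by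
      rw [← intervalIntegral.integral_add_adjacent_intervals I1 (I2.trans (I3.trans I4)),
        ← intervalIntegral.integral_add_adjacent_intervals I2 (I3.trans I4),
        ← intervalIntegral.integral_add_adjacent_intervals I3 I4]
      ring
    -- f = -u'' a.e.
    have hae : ∀ᵐ t : ℝ, t ∉ ({0,1} : Set ℝ) :=
      measure_eq_zero_iff_ae_notMem.mp (Set.Finite.measure_zero (Set.toFinite _) volume)
    have hfae : ∀ {p q : ℝ} (φ : ℝ → ℝ), 0 ≤ p → q ≤ 1 → p ≤ q →
        (∫ t in p..q, f t * φ t) = ∫ t in p..q, -u'' t * φ t := by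
      intro p q φ hp hq hpq
      apply intervalIntegral.integral_congr_ae
      filter_upwards [hae] with t ht htI
      rw [Set.uIoc_of_le hpq] at htI
      have ht0 : 0 < t := lt_of_le_of_lt hp htI.1
      have ht1 : t < 1 := by
        rcases lt_or_eq_of_le (le_trans htI.2 hq) with h | h
        · exact h
        · exact absurd (by simp [h]) ht
      rw [← hode t ⟨ht0, ht1⟩]
    -- compute each piece
    have p1 : (∫ t in (0:ℝ)..a, g t) = 0 := by
      rw [intervalIntegral.integral_congr e1]; simp
    have p4 : (∫ t in c..(1:ℝ), g t) = 0 := by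
      rw [intervalIntegral.integral_congr e4]; simp
    have p2 : (∫ t in a..b, g t) = (u b - u a)/(b-a) - u' b := by
      rw [intervalIntegral.integral_congr e2, hfae _ h0i h1le1 h1lt.le]
      exact ftcL u u' u'' hu1 hu2 hu2c a b h0i h1le1 h1lt
    have p3 : (∫ t in b..c, g t) = (u b - u c)/(c-b) + u' b := by
      rw [intervalIntegral.integral_congr e3, hfae _ h0i1 h2le1 h2lt.le]
      exact ftcR u u' u'' hu1 hu2 hu2c b c h0i1 h2le1 h2lt
    rw [show (∫ t in (0:ℝ)..1, f t * hatFn x ((i:ℕ)+1) t) = ∫ t in (0:ℝ)..1, g t from rfl,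
      hsplit, p1, p2, p3, p4]
    have hba : b - a ≠ 0 := by linarith
    have hcb : c - b ≠ 0 := by linarith
    field_simp
    ring
  -- existence
  have hEx : (stiff n x).mulVec (fun j : Fin (n - 1) => u (x ((j : ℕ) + 1))) = F := by
    funext i
    rw [stiff_entry, hF i, key i]
    have hi2 : (i:ℕ) + 2 ≤ n := by have := i.isLt; omega
    have d1 : (if h : (i:ℕ)+1 < n-1 then
          -(1 / (x ((i:ℕ)+2) - x ((i:ℕ)+1))) * (fun j : Fin (n - 1) => u (x ((j : ℕ) + 1))) ⟨(i:ℕ)+1, h⟩ else 0)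
        = -(1 / (x ((i:ℕ)+2) - x ((i:ℕ)+1))) * u (x ((i:ℕ)+2)) := by
      by_cases h : (i:ℕ)+1 < n-1
      · rw [dif_pos h]
      · rw [dif_neg h]
        have hin : (i:ℕ) + 2 = n := by have := i.isLt; omega
        rw [hin, hxn, hubc1]
        ring
    have d2 : (if h : 0 < (i:ℕ) then
          -(1 / (x ((i:ℕ)+1) - x (i:ℕ))) * (fun j : Fin (n - 1) => u (x ((j : ℕ) + 1))) ⟨(i:ℕ)-1, by omega⟩ else 0)
        = -(1 / (x ((i:ℕ)+1) - x (i:ℕ))) * u (x (i:ℕ)) := by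
      by_cases h : 0 < (i:ℕ)
      · rw [dif_pos h]
        have h' : (i:ℕ) - 1 + 1 = (i:ℕ) := by omega
        simp only [h']
      · rw [dif_neg h]
        have hz : (i:ℕ) = 0 := by omega
        rw [hz, hx0, hubc0]
        ring
    rw [d1, d2]
    ring
  refine ⟨hEx, ?_⟩
  -- uniqueness
  intro v hv
  set uvec : Fin (n-1) → ℝ := fun j : Fin (n - 1) => u (x ((j : ℕ) + 1)) with huvec
  set w : Fin (n-1) → ℝ := v - uvec with hw
  have hS0 : (stiff n x).mulVec w = 0 := by
    rw [hw, Matrix.mulVec_sub, hv, hEx, sub_self]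
  -- extended vector
  set W : ℕ → ℝ := fun k => if h : 1 ≤ k ∧ k ≤ n-1 then w ⟨k-1, by omega⟩ else 0 with hW
  have hW0 : W 0 = 0 := by simp only [hW]; rw [dif_neg (by omega)]
  have hWn : W n = 0 := by simp only [hW]; rw [dif_neg (by omega)]
  have hWval : ∀ (k : ℕ) (h : 1 ≤ k ∧ k ≤ n-1), W k = w ⟨k-1, by omega⟩ := by
    intro k h; simp only [hW]; rw [dif_pos h]
  -- the difference equation
  have heq : ∀ i : Fin (n-1),
      (1 / (x ((i:ℕ)+1) - x (i:ℕ)) + 1 / (x ((i:ℕ)+2) - x ((i:ℕ)+1))) * W ((i:ℕ)+1)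
      - (1 / (x ((i:ℕ)+2) - x ((i:ℕ)+1))) * W ((i:ℕ)+2)
      - (1 / (x ((i:ℕ)+1) - x (i:ℕ))) * W (i:ℕ) = 0 := by
    intro i
    have h0 := congrFun hS0 i
    rw [stiff_entry] at h0
    simp only [Pi.zero_apply] at h0
    have hwi : w i = W ((i:ℕ)+1) := by
      rw [hWval ((i:ℕ)+1) ⟨by omega, by have := i.isLt; omega⟩]
      exact congrArg w (Fin.ext (by simp))
    have d1 : (if h : (i:ℕ)+1 < n-1 then -(1 / (x ((i:ℕ)+2) - x ((i:ℕ)+1))) * w ⟨(i:ℕ)+1, h⟩ else 0)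
        = -(1 / (x ((i:ℕ)+2) - x ((i:ℕ)+1))) * W ((i:ℕ)+2) := by
      by_cases h : (i:ℕ)+1 < n-1
      · rw [dif_pos h, hWval ((i:ℕ)+2) ⟨by omega, by omega⟩]
        rfl
      · rw [dif_neg h]
        have hz : W ((i:ℕ)+2) = 0 := by
          simp only [hW]; rw [dif_neg (by have := i.isLt; omega)]
        rw [hz]; ring
    have d2 : (if h : 0 < (i:ℕ) then -(1 / (x ((i:ℕ)+1) - x (i:ℕ))) * w ⟨(i:ℕ)-1, by omega⟩ else 0)
        = -(1 / (x ((i:ℕ)+1) - x (i:ℕ))) * W (i:ℕ) := by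
      by_cases h : 0 < (i:ℕ)
      · rw [dif_pos h, hWval (i:ℕ) ⟨by omega, by have := i.isLt; omega⟩]
      · rw [dif_neg h]
        have hz : (i:ℕ) = 0 := by omega
        rw [hz, hW0]; ring
    rw [hwi, d1, d2] at h0
    linarith [h0]
  -- constant slope
  set C : ℝ := W 1 / (x 1 - x 0) with hC
  have claim : ∀ k, k ≤ n → W k = C * (x k - x 0) := by
    intro k
    induction k using Nat.strong_induction_on with
    | _ k ih =>
      intro hk
      match k with
      | 0 => simp [hW0]
      | 1 =>
        have h01 : x 0 < x 1 := hmono 0 (by omega)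
        rw [hC]
        field_simp
        rw [mul_div_assoc, div_self (by linarith), mul_one]
      | (m+2) =>
        have hm1 : x m < x (m+1) := hmono m (by omega)
        have hm2 : x (m+1) < x (m+2) := hmono (m+1) (by omega)
        have hIH1 : W (m+1) = C * (x (m+1) - x 0) := ih (m+1) (by omega) (by omega)
        have hIH0 : W m = C * (x m - x 0) := ih m (by omega) (by omega)
        have he := heq ⟨m, by omega⟩
        simp only [] at he
        rw [hIH1, hIH0] at he
        have h1 : x (m+1) - x m ≠ 0 := by linarith
        have h2 : x (m+2) - x (m+1) ≠ 0 := by linarith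
        field_simp at he
        have he2 : W (m+2) * ((x (m+1) - x m) * ((x (m+2) - x (m+1)) * (x (m+1) - x m))) =
            C * (x (m+2) - x 0) * ((x (m+1) - x m) * ((x (m+2) - x (m+1)) * (x (m+1) - x m))) := by
          linear_combination -(x (m+1) - x m) * (x (m+2) - x (m+1)) * he
        exact mul_right_cancel₀ (mul_ne_zero h1 (mul_ne_zero h2 h1)) he2
  have hCzero : C = 0 := by
    have := claim n le_rfl
    rw [hWn, hxn, hx0] at this
    simpa using this.symm
  have hWzero : ∀ k, k ≤ n → W k = 0 := by
    intro k hk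
    rw [claim k hk, hCzero, zero_mul]
  funext j
  have hwj : w j = 0 := by
    have h1 : W ((j:ℕ)+1) = w j := by
      rw [hWval ((j:ℕ)+1) ⟨by omega, by have := j.isLt; omega⟩]
      exact congrArg w (Fin.ext (by simp))
    rw [← h1]
    exact hWzero ((j:ℕ)+1) (by have := j.isLt; omega)
  have h2 : v j - uvec j = 0 := by
    rw [hw] at hwj
    simpa using hwj
  linarith [h2]
end

section
/- Let S be the (n−1)×(n−1) stiffness matrix associated with arbitrary (possibly non-uniformly distributed) nodes 0 = x_0 < x_1 < ⋯ < x_n = 1, and let G̃ be the (n−1)×(n−1) Green matrix with entries G̃_{ij} = G(x_i, x_j). Then S is invertible and S⁻¹ = G̃, i.e., S·G̃ = G̃·S = I. -/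
/-- The Green function of `-u'' = f` on `(0,1)` with homogeneous Dirichlet boundary
conditions: `G(x,s) = s(1-x)` if `s ≤ x` and `G(x,s) = x(1-s)` if `x < s`. -/
noncomputable def greenFn (a s : ℝ) : ℝ :=
  if s ≤ a then s * (1 - a) else a * (1 - s)

/-- The `(n-1) × (n-1)` Green matrix `G̃_{ij} = G(x_i, x_j)` (interior nodes). -/
noncomputable def greenMat (n : ℕ) (x : ℕ → ℝ) :
    Matrix (Fin (n - 1)) (Fin (n - 1)) ℝ := fun i j =>
  greenFn (x ((i : ℕ) + 1)) (x ((j : ℕ) + 1))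

lemma green_of_le {a s : ℝ} (h : a ≤ s) : greenFn a s = a * (1 - s) := by
  unfold greenFn
  split
  · have : a = s := le_antisymm h ‹s ≤ a›
    subst this; ring
  · rfl

lemma green_of_ge {a s : ℝ} (h : s ≤ a) : greenFn a s = s * (1 - a) := by
  unfold greenFn
  split
  · rfl
  · have : a = s := le_antisymm (le_of_not_ge ‹¬ s ≤ a›) h
    subst this; ring

theorem stmt3
    (n : ℕ) (hn : 2 ≤ n)
    (x : ℕ → ℝ) (hx0 : x 0 = 0) (hxn : x n = 1)
    (hmono : ∀ i, i < n → x i < x (i + 1)) :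
    IsUnit (stiff n x) ∧
      stiff n x * greenMat n x = 1 ∧ greenMat n x * stiff n x = 1 := by
  have xlt : ∀ a b : ℕ, a < b → b ≤ n → x a < x b := by
    intro a b hab hbn
    induction b with
    | zero => omega
    | succ b ih =>
      rcases Nat.lt_succ_iff_lt_or_eq.mp hab with h | h
      · exact lt_trans (ih h (by omega)) (hmono b (by omega))
      · subst h; exact hmono a (by omega)
  have xle : ∀ a b : ℕ, a ≤ b → b ≤ n → x a ≤ x b := by
    intro a b hab hbn
    rcases Nat.lt_or_ge a b with h | h
    · exact le_of_lt (xlt a b h hbn)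
    · have : a = b := le_antisymm hab h
      subst this; exact le_refl _
  have key : ∀ (i : Fin (n-1)) (g : ℕ → ℝ), g 0 = 0 → g n = 0 →
      (∑ k : Fin (n-1), stiff n x i k * g ((k:ℕ)+1)) =
        -(1/(x ((i:ℕ)+1) - x (i:ℕ))) * g (i:ℕ)
        + (1/(x ((i:ℕ)+1) - x (i:ℕ)) + 1/(x ((i:ℕ)+2) - x ((i:ℕ)+1))) * g ((i:ℕ)+1)
        - (1/(x ((i:ℕ)+2) - x ((i:ℕ)+1))) * g ((i:ℕ)+2) := by
    intro i g hg0 hgn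
    have hsum : ∀ k : Fin (n-1), stiff n x i k * g ((k:ℕ)+1) =
        (if k = i then (1/(x ((i:ℕ)+1) - x (i:ℕ)) + 1/(x ((i:ℕ)+2) - x ((i:ℕ)+1))) * g ((i:ℕ)+1) else 0)
        + (if (k:ℕ) = (i:ℕ)+1 then -(1/(x ((i:ℕ)+2) - x ((i:ℕ)+1))) * g ((i:ℕ)+2) else 0)
        + (if (i:ℕ) = (k:ℕ)+1 then -(1/(x ((i:ℕ)+1) - x (i:ℕ))) * g (i:ℕ) else 0) := by
      intro k
      simp only [stiff]
      by_cases h1 : (i:ℕ) = (k:ℕ)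
      · have hk : k = i := Fin.ext h1.symm
        subst hk
        simp [h1]
      · have hk : ¬ k = i := fun h => h1 (by rw [h])
        by_cases h2 : (k:ℕ) = (i:ℕ)+1
        · have h3 : ¬ (i:ℕ) = (k:ℕ)+1 := by omega
          rw [if_neg h1, if_pos h2, if_neg hk, if_pos h2, if_neg h3,
            show (k:ℕ)+1 = (i:ℕ)+2 from by omega]
          ring
        · by_cases h3 : (i:ℕ) = (k:ℕ)+1
          · rw [if_neg h1, if_neg h2, if_pos h3, if_neg hk, if_neg h2, if_pos h3,
              show (k:ℕ)+1 = (i:ℕ) from h3.symm]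
            ring
          · simp [h1, h2, h3, hk]
    rw [Finset.sum_congr rfl (fun k _ => hsum k)]
    rw [Finset.sum_add_distrib, Finset.sum_add_distrib]
    have s1 : (∑ k : Fin (n-1), if k = i then (1/(x ((i:ℕ)+1) - x (i:ℕ)) + 1/(x ((i:ℕ)+2) - x ((i:ℕ)+1))) * g ((i:ℕ)+1) else 0)
        = (1/(x ((i:ℕ)+1) - x (i:ℕ)) + 1/(x ((i:ℕ)+2) - x ((i:ℕ)+1))) * g ((i:ℕ)+1) := by
      simp
    have s2 : (∑ k : Fin (n-1), if (k:ℕ) = (i:ℕ)+1 then -(1/(x ((i:ℕ)+2) - x ((i:ℕ)+1))) * g ((i:ℕ)+2) else 0)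
        = -(1/(x ((i:ℕ)+2) - x ((i:ℕ)+1))) * g ((i:ℕ)+2) := by
      by_cases hi : (i:ℕ)+1 < n-1
      · have hcond : ∀ k : Fin (n-1), ((k:ℕ) = (i:ℕ)+1) = (k = ⟨(i:ℕ)+1, hi⟩) := by
          intro k; rw [Fin.ext_iff]
        simp only [hcond]
        simp
      · have hi2 : (i:ℕ)+2 = n := by have := i.isLt; omega
        have hno : ∀ k : Fin (n-1), ¬ ((k:ℕ) = (i:ℕ)+1) := by
          intro k; have := k.isLt; omega
        simp only [hno, if_false, Finset.sum_const_zero]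
        rw [hi2, hgn]; ring
    have s3 : (∑ k : Fin (n-1), if (i:ℕ) = (k:ℕ)+1 then -(1/(x ((i:ℕ)+1) - x (i:ℕ))) * g (i:ℕ) else 0)
        = -(1/(x ((i:ℕ)+1) - x (i:ℕ))) * g (i:ℕ) := by
      by_cases hi : 0 < (i:ℕ)
      · have hlt : (i:ℕ) - 1 < n - 1 := by have := i.isLt; omega
        have hcond : ∀ k : Fin (n-1), ((i:ℕ) = (k:ℕ)+1) = (k = ⟨(i:ℕ)-1, hlt⟩) := by
          intro k; rw [Fin.ext_iff]; simp only [eq_iff_iff]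
          constructor
          · intro h; omega
          · intro h; omega
        simp only [hcond]
        simp
      · have hi0 : (i:ℕ) = 0 := by omega
        have hno : ∀ k : Fin (n-1), ¬ ((i:ℕ) = (k:ℕ)+1) := by
          intro k; omega
        simp only [hno, if_false, Finset.sum_const_zero]
        rw [hi0, hg0]; ring
    rw [s1, s2, s3]; ring
  have hSG : stiff n x * greenMat n x = 1 := by
    ext i j
    rw [Matrix.mul_apply]
    have hb0 : greenFn (x 0) (x ((j:ℕ)+1)) = 0 := by
      have hpos : 0 < x ((j:ℕ)+1) := by
        have := xlt 0 ((j:ℕ)+1) (by omega) (by have := j.isLt; omega)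
        rwa [hx0] at this
      rw [hx0, green_of_le (le_of_lt hpos)]; ring
    have hbn : greenFn (x n) (x ((j:ℕ)+1)) = 0 := by
      have hle : x ((j:ℕ)+1) ≤ x n := xle ((j:ℕ)+1) n (by have := j.isLt; omega) le_rfl
      rw [green_of_ge hle, hxn]; ring
    have := key i (fun p => greenFn (x p) (x ((j:ℕ)+1))) hb0 hbn
    simp only [greenMat]
    rw [this]
    have h1ne : x ((i:ℕ)+1) - x (i:ℕ) ≠ 0 := by
      have := hmono (i:ℕ) (by have := i.isLt; omega)
      linarith
    have h2ne : x ((i:ℕ)+2) - x ((i:ℕ)+1) ≠ 0 := by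
      have := hmono ((i:ℕ)+1) (by have := i.isLt; omega)
      linarith
    have hxi1 : x (i:ℕ) < x ((i:ℕ)+1) := hmono (i:ℕ) (by have := i.isLt; omega)
    have hxi2 : x ((i:ℕ)+1) < x ((i:ℕ)+2) := hmono ((i:ℕ)+1) (by have := i.isLt; omega)
    rcases lt_trichotomy (j:ℕ) (i:ℕ) with hji | hji | hji
    · have hij : i ≠ j := by intro h; rw [h] at hji; omega
      rw [Matrix.one_apply_ne hij]
      have hs1 : x ((j:ℕ)+1) ≤ x (i:ℕ) := xle ((j:ℕ)+1) (i:ℕ) (by omega) (by have := i.isLt; omega)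
      have hs2 : x ((j:ℕ)+1) ≤ x ((i:ℕ)+1) := le_trans hs1 (le_of_lt hxi1)
      have hs3 : x ((j:ℕ)+1) ≤ x ((i:ℕ)+2) := le_trans hs2 (le_of_lt hxi2)
      simp only [green_of_ge hs1, green_of_ge hs2, green_of_ge hs3]
      field_simp
      ring
    · have hij : i = j := Fin.ext hji.symm
      subst hij
      rw [Matrix.one_apply_eq]
      have hs1 : x (i:ℕ) ≤ x ((i:ℕ)+1) := le_of_lt hxi1
      have hs3 : x ((i:ℕ)+1) ≤ x ((i:ℕ)+2) := le_of_lt hxi2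
      simp only [green_of_le hs1, green_of_ge (le_refl (x ((i:ℕ)+1))), green_of_ge hs3]
      field_simp
      ring
    · have hij : i ≠ j := by intro h; rw [h] at hji; omega
      rw [Matrix.one_apply_ne hij]
      have hjn : (j:ℕ)+1 ≤ n := by have := j.isLt; omega
      have hs3 : x ((i:ℕ)+2) ≤ x ((j:ℕ)+1) := xle ((i:ℕ)+2) ((j:ℕ)+1) (by omega) hjn
      have hs2 : x ((i:ℕ)+1) ≤ x ((j:ℕ)+1) := le_trans (le_of_lt hxi2) hs3
      have hs1 : x (i:ℕ) ≤ x ((j:ℕ)+1) := le_trans (le_of_lt hxi1) hs2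
      simp only [green_of_le hs1, green_of_le hs2, green_of_le hs3]
      field_simp
      ring
  have hGS : greenMat n x * stiff n x = 1 := mul_eq_one_comm.mp hSG
  exact ⟨⟨⟨stiff n x, greenMat n x, hSG, hGS⟩, rfl⟩, hSG, hGS⟩
end

section
/- Let f : [0,1] → ℝ be continuous and let w ∈ ℝ^{n−1} be the vector with components w_j = Σ_{i=1}^{n−1} G(x_j, x_i) · ((h_i + h_{i+1})/2) · f(x_i). Then w solves the finite difference system S w = W f̃, where f̃ = (f(x_1), …, f(x_{n−1}))ᵀ; that is, the finite difference solution u^{FD} = S⁻¹(W f̃) coincides with w. -/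
/-- The `(n-1) × (n-1)` diagonal weight matrix with `W_{jj} = (h_j + h_{j+1})/2`,
where the interior index `j : Fin (n-1)` corresponds to the node `x (j+1)`. -/
noncomputable def weightMat (n : ℕ) (x : ℕ → ℝ) :
    Matrix (Fin (n - 1)) (Fin (n - 1)) ℝ :=
  Matrix.diagonal fun j : Fin (n - 1) => (x ((j : ℕ) + 2) - x (j : ℕ)) / 2

lemma stencil (a b c s : ℝ) (hab : a < b) (hbc : b < c)
    (h : s ≤ a ∨ s = b ∨ c ≤ s) :
    -(1 / (b - a)) * greenFn a s + (1 / (b - a) + 1 / (c - b)) * greenFn b s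
      + -(1 / (c - b)) * greenFn c s = if s = b then 1 else 0 := by
  have hba : b - a ≠ 0 := sub_ne_zero.mpr hab.ne'
  have hcb : c - b ≠ 0 := sub_ne_zero.mpr hbc.ne'
  rcases h with h1 | h2 | h3
  · rw [if_neg (by linarith)]
    rw [greenFn, greenFn, greenFn, if_pos h1, if_pos (h1.trans hab.le),
      if_pos (h1.trans (hab.le.trans hbc.le))]
    field_simp
    ring
  · subst h2
    rw [if_pos rfl]
    rw [greenFn, greenFn, greenFn, if_neg (not_le.mpr hab), if_pos le_rfl, if_pos hbc.le]
    field_simp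
    ring
  · rw [if_neg (by linarith)]
    have hgc : greenFn c s = c * (1 - s) := by
      rw [greenFn]
      split_ifs with h
      · rw [le_antisymm h h3]
      · rfl
    rw [greenFn, greenFn, hgc, if_neg (not_le.mpr (by linarith)),
      if_neg (not_le.mpr (by linarith))]
    field_simp
    ring

theorem stmt4
    (n : ℕ) (hn : 2 ≤ n)
    (x : ℕ → ℝ) (hx0 : x 0 = 0) (hxn : x n = 1)
    (hmono : ∀ i, i < n → x i < x (i + 1))
    (f : ℝ → ℝ) (hf : ContinuousOn f (Set.Icc (0:ℝ) 1))
    (w : Fin (n - 1) → ℝ)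
    (hw : ∀ j : Fin (n - 1),
      w j = ∑ i : Fin (n - 1),
        greenFn (x ((j : ℕ) + 1)) (x ((i : ℕ) + 1)) *
          ((x ((i : ℕ) + 2) - x (i : ℕ)) / 2) * f (x ((i : ℕ) + 1))) :
    (stiff n x).mulVec w =
      (weightMat n x).mulVec (fun j : Fin (n - 1) => f (x ((j : ℕ) + 1))) := by
  have hlt : ∀ p q, p < q → q ≤ n → x p < x q := by
    intro p q hpq hqn
    induction q with
    | zero => omega
    | succ q ih =>
      rcases Nat.lt_or_ge p q with h | h
      · exact lt_trans (ih h (by omega)) (hmono q (by omega))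
      · have hpq' : p = q := by omega
        subst hpq'
        exact hmono p (by omega)
  have hle : ∀ p q, p ≤ q → q ≤ n → x p ≤ x q := by
    intro p q hpq hqn
    rcases Nat.lt_or_ge p q with h | h
    · exact (hlt p q h hqn).le
    · have hpq' : p = q := le_antisymm hpq h
      rw [hpq']
  funext j
  have hjlt : (j : ℕ) < n - 1 := j.isLt
  have key : ∀ i : Fin (n - 1),
      (∑ k : Fin (n - 1), stiff n x j k * greenFn (x ((k : ℕ) + 1)) (x ((i : ℕ) + 1)))
        = if (i : ℕ) = (j : ℕ) then 1 else 0 := by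
    intro i
    have hilt : (i : ℕ) < n - 1 := i.isLt
    set s : ℝ := x ((i : ℕ) + 1) with hs
    have hs0 : 0 < s := by
      have := hlt 0 ((i : ℕ) + 1) (by omega) (by omega)
      rw [hx0] at this; exact this
    have hs1 : s < 1 := by
      have := hlt ((i : ℕ) + 1) n (by omega) le_rfl
      rw [hxn] at this; exact this
    have hg0 : greenFn (x 0) s = 0 := by
      rw [hx0, greenFn, if_neg (not_le.mpr hs0)]
      ring
    have hgn : greenFn (x n) s = 0 := by
      rw [hxn, greenFn, if_pos hs1.le]
      ring
    have hsplit : ∀ k : Fin (n - 1), stiff n x j k * greenFn (x ((k : ℕ) + 1)) s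
        = (if (k : ℕ) = (j : ℕ) then
            (1 / (x ((j:ℕ) + 1) - x (j:ℕ)) + 1 / (x ((j:ℕ) + 2) - x ((j:ℕ) + 1)))
              * greenFn (x ((j:ℕ) + 1)) s else 0)
          + (if (k : ℕ) = (j : ℕ) + 1 then
              -(1 / (x ((j:ℕ) + 2) - x ((j:ℕ) + 1))) * greenFn (x ((j:ℕ) + 2)) s else 0)
          + (if (k : ℕ) + 1 = (j : ℕ) then
              -(1 / (x ((j:ℕ) + 1) - x (j:ℕ))) * greenFn (x (j:ℕ)) s else 0) := by
      intro k
      rw [stiff]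
      by_cases h1 : (j : ℕ) = (k : ℕ)
      · rw [if_pos h1, if_pos h1.symm,
          if_neg (by omega : ¬((k : ℕ) = (j : ℕ) + 1)),
          if_neg (by omega : ¬((k : ℕ) + 1 = (j : ℕ))), h1.symm]
        ring
      · by_cases h2 : (k : ℕ) = (j : ℕ) + 1
        · rw [if_neg h1, if_pos h2, h2,
            if_neg (by omega : ¬((j : ℕ) + 1 = (j : ℕ))),
            if_neg (by omega : ¬((j : ℕ) + 1 + 1 = (j : ℕ))),
            show (j : ℕ) + 1 + 1 = (j : ℕ) + 2 from rfl]
          simp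
        · by_cases h3 : (j : ℕ) = (k : ℕ) + 1
          · rw [if_neg h1, if_neg h2, if_pos h3, if_neg (fun hh => h1 hh.symm), if_neg h2,
              if_pos h3.symm, ← h3]
            ring
          · rw [if_neg h1, if_neg h2, if_neg h3, if_neg (fun hh => h1 hh.symm), if_neg h2,
              if_neg (fun hh => h3 hh.symm)]
            ring
    calc (∑ k : Fin (n - 1), stiff n x j k * greenFn (x ((k : ℕ) + 1)) s)
        = (∑ k : Fin (n - 1), if (k : ℕ) = (j : ℕ) then
              (1 / (x ((j:ℕ) + 1) - x (j:ℕ)) + 1 / (x ((j:ℕ) + 2) - x ((j:ℕ) + 1)))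
                * greenFn (x ((j:ℕ) + 1)) s else 0)
          + (∑ k : Fin (n - 1), if (k : ℕ) = (j : ℕ) + 1 then
              -(1 / (x ((j:ℕ) + 2) - x ((j:ℕ) + 1))) * greenFn (x ((j:ℕ) + 2)) s else 0)
          + (∑ k : Fin (n - 1), if (k : ℕ) + 1 = (j : ℕ) then
              -(1 / (x ((j:ℕ) + 1) - x (j:ℕ))) * greenFn (x (j:ℕ)) s else 0) := by
          rw [← Finset.sum_add_distrib, ← Finset.sum_add_distrib]
          exact Finset.sum_congr rfl fun k _ => hsplit k
      _ = -(1 / (x ((j:ℕ) + 1) - x (j:ℕ))) * greenFn (x (j:ℕ)) s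
          + (1 / (x ((j:ℕ) + 1) - x (j:ℕ)) + 1 / (x ((j:ℕ) + 2) - x ((j:ℕ) + 1)))
              * greenFn (x ((j:ℕ) + 1)) s
          + -(1 / (x ((j:ℕ) + 2) - x ((j:ℕ) + 1))) * greenFn (x ((j:ℕ) + 2)) s := by
          have e1 : (∑ k : Fin (n - 1), if (k : ℕ) = (j : ℕ) then
              (1 / (x ((j:ℕ) + 1) - x (j:ℕ)) + 1 / (x ((j:ℕ) + 2) - x ((j:ℕ) + 1)))
                * greenFn (x ((j:ℕ) + 1)) s else 0)
              = (1 / (x ((j:ℕ) + 1) - x (j:ℕ)) + 1 / (x ((j:ℕ) + 2) - x ((j:ℕ) + 1)))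
                * greenFn (x ((j:ℕ) + 1)) s := by
            rw [Fin.sum_univ_eq_sum_range (fun k : ℕ => if k = (j : ℕ) then
              (1 / (x ((j:ℕ) + 1) - x (j:ℕ)) + 1 / (x ((j:ℕ) + 2) - x ((j:ℕ) + 1)))
                * greenFn (x ((j:ℕ) + 1)) s else 0) (n - 1)]
            rw [Finset.sum_ite_eq' (Finset.range (n - 1)) (j : ℕ),
              if_pos (Finset.mem_range.mpr hjlt)]
          have e2 : (∑ k : Fin (n - 1), if (k : ℕ) = (j : ℕ) + 1 then
              -(1 / (x ((j:ℕ) + 2) - x ((j:ℕ) + 1))) * greenFn (x ((j:ℕ) + 2)) s else 0)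
              = -(1 / (x ((j:ℕ) + 2) - x ((j:ℕ) + 1))) * greenFn (x ((j:ℕ) + 2)) s := by
            rw [Fin.sum_univ_eq_sum_range (fun k : ℕ => if k = (j : ℕ) + 1 then
              -(1 / (x ((j:ℕ) + 2) - x ((j:ℕ) + 1))) * greenFn (x ((j:ℕ) + 2)) s else 0) (n - 1)]
            rw [Finset.sum_ite_eq' (Finset.range (n - 1)) ((j : ℕ) + 1)]
            by_cases hb : (j : ℕ) + 1 < n - 1
            · rw [if_pos (Finset.mem_range.mpr hb)]
            · have hjn : (j : ℕ) + 2 = n := by omega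
              rw [if_neg (by simp only [Finset.mem_range]; omega), hjn, hgn]
              ring
          have e3 : (∑ k : Fin (n - 1), if (k : ℕ) + 1 = (j : ℕ) then
              -(1 / (x ((j:ℕ) + 1) - x (j:ℕ))) * greenFn (x (j:ℕ)) s else 0)
              = -(1 / (x ((j:ℕ) + 1) - x (j:ℕ))) * greenFn (x (j:ℕ)) s := by
            rcases Nat.eq_zero_or_pos (j : ℕ) with hj0 | hjp
            · rw [hj0]
              simp [hg0]
            · obtain ⟨t, ht⟩ : ∃ t, (j : ℕ) = t + 1 := ⟨(j : ℕ) - 1, by omega⟩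
              rw [ht]
              have : (∑ k : Fin (n - 1), if (k : ℕ) + 1 = t + 1 then
                  -(1 / (x (t + 1 + 1) - x (t + 1))) * greenFn (x (t + 1)) s else 0)
                  = ∑ k : Fin (n - 1), if (k : ℕ) = t then
                  -(1 / (x (t + 1 + 1) - x (t + 1))) * greenFn (x (t + 1)) s else 0 := by
                refine Finset.sum_congr rfl fun k _ => ?_
                congr 1
                simp
              rw [this]
              rw [Fin.sum_univ_eq_sum_range (fun k : ℕ => if k = t then
                -(1 / (x (t + 1 + 1) - x (t + 1))) * greenFn (x (t + 1)) s else 0) (n - 1)]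
              rw [Finset.sum_ite_eq' (Finset.range (n - 1)) t,
                if_pos (Finset.mem_range.mpr (by omega))]
          rw [e1, e2, e3]
          ring
      _ = if (i : ℕ) = (j : ℕ) then 1 else 0 := by
          have hab : x (j : ℕ) < x ((j : ℕ) + 1) := hlt _ _ (by omega) (by omega)
          have hbc : x ((j : ℕ) + 1) < x ((j : ℕ) + 2) := hlt _ _ (by omega) (by omega)
          have htri : s ≤ x (j : ℕ) ∨ s = x ((j : ℕ) + 1) ∨ x ((j : ℕ) + 2) ≤ s := by
            rcases lt_trichotomy ((i : ℕ) : ℕ) (j : ℕ) with h | h | h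
            · exact Or.inl (hle ((i : ℕ) + 1) (j : ℕ) (by omega) (by omega))
            · exact Or.inr (Or.inl (by rw [hs, h]))
            · exact Or.inr (Or.inr (hle ((j : ℕ) + 2) ((i : ℕ) + 1) (by omega) (by omega)))
          rw [stencil (x (j : ℕ)) (x ((j : ℕ) + 1)) (x ((j : ℕ) + 2)) s hab hbc htri]
          by_cases hij : (i : ℕ) = (j : ℕ)
          · rw [if_pos hij, if_pos (by rw [hs, hij])]
          · rw [if_neg hij, if_neg ?_]
            intro hsb
            rcases lt_trichotomy ((i : ℕ) : ℕ) (j : ℕ) with h | h | h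
            · have hlt' : s < x ((j : ℕ) + 1) :=
                lt_of_le_of_lt (hle _ _ (by omega) (by omega)) hab
              exact absurd hsb hlt'.ne
            · exact hij h
            · have hlt' : x ((j : ℕ) + 1) < s :=
                lt_of_lt_of_le hbc (hle _ _ (by omega) (by omega))
              exact absurd hsb.symm hlt'.ne
  -- row computation
  have hRHS : (weightMat n x).mulVec (fun j : Fin (n - 1) => f (x ((j : ℕ) + 1))) j
      = (x ((j : ℕ) + 2) - x (j : ℕ)) / 2 * f (x ((j : ℕ) + 1)) := by
    rw [weightMat, Matrix.mulVec_diagonal]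
  rw [hRHS, Matrix.mulVec, dotProduct]
  calc (∑ k : Fin (n - 1), stiff n x j k * w k)
      = ∑ k : Fin (n - 1), ∑ i : Fin (n - 1),
          stiff n x j k * (greenFn (x ((k : ℕ) + 1)) (x ((i : ℕ) + 1)) *
            ((x ((i : ℕ) + 2) - x (i : ℕ)) / 2) * f (x ((i : ℕ) + 1))) := by
        refine Finset.sum_congr rfl fun k _ => ?_
        rw [hw k, Finset.mul_sum]
    _ = ∑ i : Fin (n - 1), (∑ k : Fin (n - 1),
          stiff n x j k * greenFn (x ((k : ℕ) + 1)) (x ((i : ℕ) + 1))) *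
            (((x ((i : ℕ) + 2) - x (i : ℕ)) / 2) * f (x ((i : ℕ) + 1))) := by
        rw [Finset.sum_comm]
        refine Finset.sum_congr rfl fun i _ => ?_
        rw [Finset.sum_mul]
        refine Finset.sum_congr rfl fun k _ => ?_
        ring
    _ = ∑ i : Fin (n - 1), (if (i : ℕ) = (j : ℕ) then (1:ℝ) else 0) *
            (((x ((i : ℕ) + 2) - x (i : ℕ)) / 2) * f (x ((i : ℕ) + 1))) := by
        refine Finset.sum_congr rfl fun i _ => ?_
        rw [key i]
    _ = ∑ i : Fin (n - 1), (if i = j then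
            ((x ((i : ℕ) + 2) - x (i : ℕ)) / 2) * f (x ((i : ℕ) + 1)) else 0) := by
        refine Finset.sum_congr rfl fun i _ => ?_
        by_cases h : i = j
        · rw [if_pos h, if_pos (by rw [h]), one_mul]
        · rw [if_neg h, if_neg (fun hh => h (Fin.ext hh)), zero_mul]
    _ = (x ((j : ℕ) + 2) - x (j : ℕ)) / 2 * f (x ((j : ℕ) + 1)) := by
        rw [Finset.sum_ite_eq' Finset.univ j
          (fun i : Fin (n - 1) => ((x ((i : ℕ) + 2) - x (i : ℕ)) / 2) * f (x ((i : ℕ) + 1)))]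
        rw [if_pos (Finset.mem_univ j)]
end

section
/- Let f ∈ C²([0,1]) and let u ∈ C²([0,1]) satisfy −u''(x) = f(x) for all x ∈ (0,1) with u(0) = u(1) = 0. Let u^{FD} = (u_1, …, u_{n−1})ᵀ be the unique solution of the finite difference system S u^{FD} = W f̃, where f̃ = (f(x_1), …, f(x_{n−1}))ᵀ. Then max_{1 ≤ j ≤ n−1} |u(x_j) − u_j| ≤ (h²/48)·(4‖f′‖_∞ + ‖f″‖_∞), where h = max_{1 ≤ j ≤ n} h_j and ‖·‖_∞ denotes the maximum of the absolute value over [0,1]. -/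
open Set intervalIntegral MeasureTheory

lemma ftc01 (a b : ℝ) (ha : 0 ≤ a) (hb : b ≤ 1) (hab : a ≤ b)
    (F F' : ℝ → ℝ)
    (hF : ∀ t ∈ Set.Icc (0:ℝ) 1, HasDerivWithinAt F (F' t) (Set.Icc 0 1) t)
    (hF'c : ContinuousOn F' (Set.Icc 0 1)) :
    ∫ t in a..b, F' t = F b - F a := by
  have hsub : Set.Icc a b ⊆ Set.Icc (0:ℝ) 1 := Set.Icc_subset_Icc ha hb
  apply intervalIntegral.integral_eq_sub_of_hasDeriv_right_of_le hab
  · exact fun t ht => ((hF t (hsub ht)).continuousWithinAt).mono hsub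
  · intro t ht
    have ht' : t ∈ Set.Ioo (0:ℝ) 1 := ⟨lt_of_le_of_lt ha ht.1, lt_of_lt_of_le ht.2 hb⟩
    have : HasDerivAt F (F' t) t :=
      (hF t (Set.Ioo_subset_Icc_self ht')).hasDerivAt (Icc_mem_nhds ht'.1 ht'.2)
    exact this.hasDerivWithinAt
  · exact (hF'c.mono hsub).intervalIntegrable_of_Icc hab

lemma trap (a b : ℝ) (ha : 0 ≤ a) (hb : b ≤ 1) (hab : a ≤ b) (c m : ℝ)
    (φ φ' φ'' : ℝ → ℝ)
    (h1 : ∀ t ∈ Set.Icc (0:ℝ) 1, HasDerivWithinAt φ (φ' t) (Set.Icc 0 1) t)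
    (h2 : ∀ t ∈ Set.Icc (0:ℝ) 1, HasDerivWithinAt φ' (φ'' t) (Set.Icc 0 1) t)
    (h2c : ContinuousOn φ'' (Set.Icc (0:ℝ) 1)) :
    ∫ t in a..b, ((t-a)*(b-t)/2 * ((c+m*t) * φ'' t + 2*m*φ' t) + (c+m*t) * φ t)
      = (b-a)*((c+m*a)*φ a + (c+m*b)*φ b)/2 := by
  have hφc : ContinuousOn φ (Set.Icc (0:ℝ) 1) := fun t ht => (h1 t ht).continuousWithinAt
  have hφ'c : ContinuousOn φ' (Set.Icc (0:ℝ) 1) := fun t ht => (h2 t ht).continuousWithinAt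
  have hF : ∀ t ∈ Set.Icc (0:ℝ) 1, HasDerivWithinAt
      (fun t => (t-a)*(b-t)/2 * (m*φ t + (c+m*t)*φ' t) - (a+b-2*t)/2 * ((c+m*t)*φ t))
      ((t-a)*(b-t)/2 * ((c+m*t) * φ'' t + 2*m*φ' t) + (c+m*t) * φ t) (Set.Icc 0 1) t := by
    intro t ht
    have hK : HasDerivAt (fun t : ℝ => (t-a)*(b-t)/2) ((1*(b-t)+(t-a)*(0-1))/2) t :=
      (((hasDerivAt_id t).sub_const a).mul ((hasDerivAt_const t b).sub (hasDerivAt_id t))).div_const 2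
    have hK' : HasDerivAt (fun t : ℝ => (a+b-2*t)/2) ((0-(0*t+2*1))/2) t :=
      (((hasDerivAt_const t (a+b)).sub ((hasDerivAt_const t (2:ℝ)).mul (hasDerivAt_id t)))).div_const 2
    have hg : HasDerivAt (fun t : ℝ => c+m*t) (0+(0*t+m*1)) t :=
      (hasDerivAt_const t c).add ((hasDerivAt_const t m).mul (hasDerivAt_id t))
    have hw : HasDerivWithinAt (fun t => (c+m*t)*φ t)
        ((0+(0*t+m*1)) * φ t + (c+m*t) * φ' t) (Set.Icc 0 1) t :=
      hg.hasDerivWithinAt.mul (h1 t ht)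
    have hw' : HasDerivWithinAt (fun t => m*φ t + (c+m*t)*φ' t)
        ((0 * φ t + m * φ' t) + ((0+(0*t+m*1)) * φ' t + (c+m*t) * φ'' t)) (Set.Icc 0 1) t :=
      ((hasDerivAt_const t m).hasDerivWithinAt.mul (h1 t ht)).add
        (hg.hasDerivWithinAt.mul (h2 t ht))
    have := ((hK.hasDerivWithinAt.mul hw').sub (hK'.hasDerivWithinAt.mul hw))
    exact this.congr_deriv (by ring)
  have hcont : ContinuousOn
      (fun t => (t-a)*(b-t)/2 * ((c+m*t) * φ'' t + 2*m*φ' t) + (c+m*t) * φ t)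
      (Set.Icc (0:ℝ) 1) := by
    apply ContinuousOn.add
    · exact (Continuous.continuousOn (by continuity)).mul
        (((Continuous.continuousOn (by continuity : Continuous fun t : ℝ => c+m*t)).mul h2c).add
          (continuousOn_const.mul hφ'c))
    · exact (Continuous.continuousOn (by continuity : Continuous fun t : ℝ => c+m*t)).mul hφc
  rw [ftc01 a b ha hb hab _ _ hF hcont]
  ring

noncomputable def grn (s t : ℝ) : ℝ := if s ≤ t then s*(1-t) else t*(1-s)

lemma grn_left {s t : ℝ} (h : t ≤ s) (hs : s ≤ 1) : grn s t = t*(1-s) := by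
  unfold grn
  split_ifs with h'
  · have : s = t := le_antisymm h' h
    rw [this]
  · rfl

lemma grn_right {s t : ℝ} (h : s ≤ t) : grn s t = s*(1-t) := if_pos h

lemma green_rep
    (f : ℝ → ℝ) (hfc : ContinuousOn f (Set.Icc (0:ℝ) 1))
    (u u' u'' : ℝ → ℝ)
    (hu1 : ∀ t ∈ Set.Icc (0:ℝ) 1, HasDerivWithinAt u (u' t) (Set.Icc 0 1) t)
    (hu2 : ∀ t ∈ Set.Icc (0:ℝ) 1, HasDerivWithinAt u' (u'' t) (Set.Icc 0 1) t)
    (hu2c : ContinuousOn u'' (Set.Icc (0:ℝ) 1))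
    (hode : ∀ t ∈ Set.Ioo (0:ℝ) 1, -u'' t = f t)
    (hubc0 : u 0 = 0) (hubc1 : u 1 = 0)
    (a : ℝ) (ha : a ∈ Set.Ioo (0:ℝ) 1) :
    ∫ t in (0:ℝ)..1, grn a t * f t = u a := by
  obtain ⟨ha0, ha1⟩ := ha
  have hI1 : ∫ t in (0:ℝ)..a, t * u'' t = (a*u' a - u a) - (0*u' 0 - u 0) := by
    apply ftc01 0 a le_rfl ha1.le ha0.le (fun t => t*u' t - u t)
    · intro t ht
      have := ((hasDerivAt_id t).hasDerivWithinAt.mul (hu2 t ht)).sub (hu1 t ht)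
      exact this.congr_deriv (by simp only [Pi.mul_apply, Pi.sub_apply, Pi.add_apply, id_eq]; ring)
    · exact continuous_id.continuousOn.mul hu2c
  have hI2 : ∫ t in a..(1:ℝ), (1-t) * u'' t = ((1-1)*u' 1 + u 1) - ((1-a)*u' a + u a) := by
    apply ftc01 a 1 ha0.le le_rfl ha1.le (fun t => (1-t)*u' t + u t)
    · intro t ht
      have := (((hasDerivAt_const t (1:ℝ)).sub (hasDerivAt_id t)).hasDerivWithinAt.mul
        (hu2 t ht)).add (hu1 t ht)
      exact this.congr_deriv (by simp only [Pi.mul_apply, Pi.sub_apply, Pi.add_apply, id_eq]; ring)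
    · exact ((continuous_const.sub continuous_id).continuousOn).mul hu2c
  -- left piece
  have heqL : Set.EqOn (fun t => grn a t * f t) (fun t => (1-a) * -(t * u'' t))
      (Set.uIcc 0 a) := by
    intro t ht
    rw [Set.uIcc_of_le ha0.le] at ht
    show grn a t * f t = (1-a) * -(t * u'' t)
    rcases eq_or_lt_of_le ht.1 with h0 | h0
    · rw [← h0, grn_left ha0.le ha1.le]
      ring
    · have htI : t ∈ Set.Ioo (0:ℝ) 1 := ⟨h0, lt_of_le_of_lt ht.2 ha1⟩
      rw [grn_left ht.2 ha1.le, ← hode t htI]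
      ring
  have heqR : Set.EqOn (fun t => grn a t * f t) (fun t => a * -((1-t) * u'' t))
      (Set.uIcc a 1) := by
    intro t ht
    rw [Set.uIcc_of_le ha1.le] at ht
    show grn a t * f t = a * -((1-t) * u'' t)
    rcases eq_or_lt_of_le ht.2 with h1 | h1
    · rw [grn_right ht.1, h1]
      ring
    · have htI : t ∈ Set.Ioo (0:ℝ) 1 := ⟨lt_of_lt_of_le ha0 ht.1, h1⟩
      rw [grn_right ht.1, ← hode t htI]
      ring
  have hintL : IntervalIntegrable (fun t => grn a t * f t) MeasureTheory.volume 0 a := by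
    apply ContinuousOn.intervalIntegrable
    apply ContinuousOn.congr (f := fun t => (1-a) * -(t * u'' t)) _ heqL
    rw [Set.uIcc_of_le ha0.le]
    exact continuousOn_const.mul ((continuous_id.continuousOn.mul
      (hu2c.mono (Set.Icc_subset_Icc le_rfl ha1.le))).neg)
  have hintR : IntervalIntegrable (fun t => grn a t * f t) MeasureTheory.volume a 1 := by
    apply ContinuousOn.intervalIntegrable
    apply ContinuousOn.congr (f := fun t => a * -((1-t) * u'' t)) _ heqR
    rw [Set.uIcc_of_le ha1.le]
    exact continuousOn_const.mul (((continuous_const.sub continuous_id).continuousOn.mul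
      (hu2c.mono (Set.Icc_subset_Icc ha0.le le_rfl))).neg)
  rw [← intervalIntegral.integral_add_adjacent_intervals hintL hintR,
    intervalIntegral.integral_congr heqL, intervalIntegral.integral_congr heqR,
    intervalIntegral.integral_const_mul, intervalIntegral.integral_const_mul,
    intervalIntegral.integral_neg, intervalIntegral.integral_neg, hI1, hI2]
  rw [hubc0, hubc1]
  ring

lemma intK (a b : ℝ) : ∫ t in a..b, (t-a)*(b-t)/2 = (b-a)^3/12 := by
  have h : ∀ t ∈ Set.uIcc a b, HasDerivAt (fun t => (t-a)^2*(3*b-a-2*t)/12)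
      ((t-a)*(b-t)/2) t := by
    intro t _
    have := ((((hasDerivAt_id t).sub_const a).pow 2).mul
      ((hasDerivAt_const t (3*b-a)).sub ((hasDerivAt_const t (2:ℝ)).mul
        (hasDerivAt_id t)))).div_const 12
    exact this.congr_deriv (by simp only [Pi.mul_apply, Pi.sub_apply, Pi.pow_apply, id_eq, Nat.cast_ofNat]; ring)
  rw [intervalIntegral.integral_eq_sub_of_hasDerivAt h
    ((Continuous.intervalIntegrable (by continuity) a b))]
  ring

lemma piece_bound (a b : ℝ) (ha : 0 ≤ a) (hb : b ≤ 1) (hab : a ≤ b) (c m F1 F2 : ℝ)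
    (φ' φ'' : ℝ → ℝ)
    (hφ'c : ContinuousOn φ' (Set.Icc (0:ℝ) 1))
    (hφ''c : ContinuousOn φ'' (Set.Icc (0:ℝ) 1))
    (hMg : ∀ t ∈ Set.Icc a b, |c+m*t| ≤ 1/4)
    (hF1 : ∀ t ∈ Set.Icc (0:ℝ) 1, |φ' t| ≤ F1)
    (hF2 : ∀ t ∈ Set.Icc (0:ℝ) 1, |φ'' t| ≤ F2) :
    |(∫ t in a..b, (t-a)*(b-t)/2 * ((c+m*t) * φ'' t + 2*m*φ' t))|
      ≤ (b-a)^3/12 * (2 * |m| * F1 + F2/4) := by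
  have hsub : Set.Icc a b ⊆ Set.Icc (0:ℝ) 1 := Set.Icc_subset_Icc ha hb
  have hcont : ContinuousOn (fun t => (t-a)*(b-t)/2 * ((c+m*t) * φ'' t + 2*m*φ' t))
      (Set.Icc a b) := by
    apply ContinuousOn.mul (Continuous.continuousOn (by continuity))
    exact ((Continuous.continuousOn (by continuity : Continuous fun t : ℝ => c+m*t)).mul
      (hφ''c.mono hsub)).add (continuousOn_const.mul (hφ'c.mono hsub))
  calc |(∫ t in a..b, (t-a)*(b-t)/2 * ((c+m*t) * φ'' t + 2*m*φ' t))|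
      ≤ ∫ t in a..b, |(t-a)*(b-t)/2 * ((c+m*t) * φ'' t + 2*m*φ' t)| :=
        intervalIntegral.abs_integral_le_integral_abs hab
    _ ≤ ∫ t in a..b, (t-a)*(b-t)/2 * (2 * |m| * F1 + F2/4) := by
        apply intervalIntegral.integral_mono_on hab
        · exact (hcont.abs).intervalIntegrable_of_Icc hab
        · exact Continuous.intervalIntegrable (by continuity) a b
        · intro t ht
          have hK : 0 ≤ (t-a)*(b-t)/2 :=
            div_nonneg (mul_nonneg (sub_nonneg.2 ht.1) (sub_nonneg.2 ht.2)) (by norm_num)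
          have e1 : |(c+m*t) * φ'' t| ≤ 1/4 * F2 := by
            rw [abs_mul]
            exact mul_le_mul (hMg t ht) (hF2 t (hsub ht)) (abs_nonneg _) (by norm_num)
          have e2 : |2*m*φ' t| ≤ 2 * |m| * F1 := by
            rw [abs_mul, abs_mul, abs_two]
            exact mul_le_mul_of_nonneg_left (hF1 t (hsub ht)) (by positivity)
          have h1 : |(c+m*t) * φ'' t + 2*m*φ' t| ≤ 2 * |m| * F1 + F2/4 := by
            calc |(c+m*t) * φ'' t + 2*m*φ' t| ≤ |(c+m*t) * φ'' t| + |2*m*φ' t| := abs_add_le _ _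
              _ ≤ 2 * |m| * F1 + F2/4 := by linarith
          rw [abs_mul, abs_of_nonneg hK]
          exact mul_le_mul_of_nonneg_left h1 hK
    _ = (b-a)^3/12 * (2 * |m| * F1 + F2/4) := by
        rw [intervalIntegral.integral_mul_const, intK]


lemma xmono_le (n : ℕ) (x : ℕ → ℝ) (hmono : ∀ i, i < n → x i < x (i + 1)) :
    ∀ p q, p ≤ q → q ≤ n → x p ≤ x q := by
  intro p q hpq hq
  induction q with
  | zero =>
    have : p = 0 := Nat.le_zero.mp hpq
    simp [this]
  | succ q ih =>
    rcases Nat.eq_or_lt_of_le hpq with h | h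
    · rw [h]
    · exact le_trans (ih (by omega) (by omega)) (hmono q (by omega)).le

lemma xmono_lt (n : ℕ) (x : ℕ → ℝ) (hmono : ∀ i, i < n → x i < x (i + 1)) :
    ∀ p q, p < q → q ≤ n → x p < x q := by
  intro p q hpq hq
  have h1 : x p ≤ x (q - 1) := xmono_le n x hmono p (q-1) (by omega) (by omega)
  have h2 : x (q - 1) < x q := by
    have := hmono (q-1) (by omega)
    have e : q - 1 + 1 = q := by omega
    rwa [e] at this
  linarith

lemma sum_fin_ite {N : ℕ} (c : ℕ) (g : Fin N → ℝ) :
    ∑ j : Fin N, (if (j : ℕ) = c then g j else 0)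
      = if h : c < N then g ⟨c, h⟩ else 0 := by
  split_ifs with h
  · rw [Finset.sum_eq_single (⟨c, h⟩ : Fin N)]
    · simp
    · intro b _ hb
      have : (b : ℕ) ≠ c := fun e => hb (Fin.ext e)
      simp [this]
    · intro hb
      exact absurd (Finset.mem_univ _) hb
  · apply Finset.sum_eq_zero
    intro j _
    have : (j : ℕ) ≠ c := fun e => h (e ▸ j.isLt)
    simp [this]

lemma stiff_apply (n : ℕ) (x : ℕ → ℝ) (j k : Fin (n - 1)) :
    stiff n x j k
      = (if (j : ℕ) = (k : ℕ) then
          1/(x ((k:ℕ)+1) - x (k:ℕ)) + 1/(x ((k:ℕ)+2) - x ((k:ℕ)+1)) else 0)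
        + (if (j : ℕ) = (k : ℕ) + 1 then -(1/(x ((k:ℕ)+2) - x ((k:ℕ)+1))) else 0)
        + (if (j : ℕ) + 1 = (k : ℕ) then -(1/(x ((k:ℕ)+1) - x (k:ℕ))) else 0) := by
  unfold stiff
  split_ifs <;> try omega
  all_goals ring_nf
  all_goals try rfl
  · rename_i h1 h2 h3
    rw [show (1+(j:ℕ)) = 1+(k:ℕ) from by omega, show (2+(j:ℕ)) = 2+(k:ℕ) from by omega,
      show (j:ℕ) = (k:ℕ) from h1]
  · rename_i h1 h2 h3 h4
    rw [show (2+(j:ℕ)) = 1+(k:ℕ) from by omega, show (1+(j:ℕ)) = (k:ℕ) from by omega]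
  · rename_i h1 h2 h3 h4
    rw [show (1+(j:ℕ)) = 2+(k:ℕ) from by omega, show (j:ℕ) = 1+(k:ℕ) from by omega]

noncomputable def Minv (n : ℕ) (x : ℕ → ℝ) : Matrix (Fin (n-1)) (Fin (n-1)) ℝ :=
  fun i k => grn (x ((i:ℕ)+1)) (x ((k:ℕ)+1))

lemma Minv_mul_stiff (n : ℕ) (hn : 2 ≤ n) (x : ℕ → ℝ) (hx0 : x 0 = 0) (hxn : x n = 1)
    (hmono : ∀ i, i < n → x i < x (i + 1)) :
    Minv n x * stiff n x = 1 := by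
  have hN : n - 1 ≥ 1 := by omega
  ext i k
  have hik : (i:ℕ) < n - 1 := i.isLt
  have hkk : (k:ℕ) < n - 1 := k.isLt
  set a := x ((i:ℕ)+1) with ha
  have ha0 : 0 < a := by
    rw [ha, ← hx0]; exact xmono_lt n x hmono 0 ((i:ℕ)+1) (by omega) (by omega)
  have ha1 : a < 1 := by
    rw [ha, ← hxn]; exact xmono_lt n x hmono ((i:ℕ)+1) n (by omega) le_rfl
  have hval : ∀ p : ℕ, p ≤ n → ∀ hpa : x p ≤ a, grn a (x p) = x p * (1-a) :=
    fun p hp hpa => grn_left hpa ha1.le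
  set D := 1/(x ((k:ℕ)+1) - x (k:ℕ)) + 1/(x ((k:ℕ)+2) - x ((k:ℕ)+1)) with hD
  set E := -(1/(x ((k:ℕ)+2) - x ((k:ℕ)+1))) with hE
  set Fv := -(1/(x ((k:ℕ)+1) - x (k:ℕ))) with hF
  have expand : ∀ j : Fin (n-1), Minv n x i j * stiff n x j k =
      (if (j:ℕ) = (k:ℕ) then grn a (x ((j:ℕ)+1)) * D else 0)
      + (if (j:ℕ) = (k:ℕ)+1 then grn a (x ((j:ℕ)+1)) * E else 0)
      + (if (j:ℕ)+1 = (k:ℕ) then grn a (x ((j:ℕ)+1)) * Fv else 0) := by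
    intro j
    rw [stiff_apply]
    show grn a (x ((j:ℕ)+1)) * _ = _
    split_ifs <;> ring
  rw [Matrix.mul_apply]
  rw [Finset.sum_congr rfl (fun j _ => expand j), Finset.sum_add_distrib,
    Finset.sum_add_distrib]
  have hT1 : ∑ j : Fin (n-1), (if (j:ℕ) = (k:ℕ) then grn a (x ((j:ℕ)+1)) * D else 0)
      = grn a (x ((k:ℕ)+1)) * D := by
    rw [sum_fin_ite (N := n-1) (k:ℕ) (fun j => grn a (x ((j:ℕ)+1)) * D), dif_pos hkk]
  have hT2 : ∑ j : Fin (n-1), (if (j:ℕ) = (k:ℕ)+1 then grn a (x ((j:ℕ)+1)) * E else 0)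
      = grn a (x ((k:ℕ)+2)) * E := by
    rw [sum_fin_ite (N := n-1) ((k:ℕ)+1) (fun j => grn a (x ((j:ℕ)+1)) * E)]
    split_ifs with h
    · norm_num
    · have hkn : (k:ℕ)+2 = n := by omega
      have : grn a (x ((k:ℕ)+2)) = 0 := by
        rw [hkn, hxn, grn_right ha1.le]
        ring
      rw [this]
      ring
  have hT3 : ∑ j : Fin (n-1), (if (j:ℕ)+1 = (k:ℕ) then grn a (x ((j:ℕ)+1)) * Fv else 0)
      = grn a (x (k:ℕ)) * Fv := by
    rcases Nat.eq_zero_or_pos (k:ℕ) with hk0 | hk0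
    · have : ∀ j : Fin (n-1), (if (j:ℕ)+1 = (k:ℕ) then grn a (x ((j:ℕ)+1)) * Fv else 0) = 0 := by
        intro j; rw [if_neg (by omega)]
      rw [Finset.sum_congr rfl (fun j _ => this j), Finset.sum_const, smul_zero]
      have : grn a (x (k:ℕ)) = 0 := by
        rw [hk0, hx0, grn_left ha0.le ha1.le]
        ring
      rw [this]
      ring
    · obtain ⟨c, hc⟩ : ∃ c, (k:ℕ) = c+1 := ⟨(k:ℕ)-1, by omega⟩
      have : ∀ j : Fin (n-1), (if (j:ℕ)+1 = (k:ℕ) then grn a (x ((j:ℕ)+1)) * Fv else 0)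
          = (if (j:ℕ) = c then grn a (x ((j:ℕ)+1)) * Fv else 0) := by
        intro j
        congr 1
        simp only [eq_iff_iff]
        omega
      rw [Finset.sum_congr rfl (fun j _ => this j),
        sum_fin_ite (N := n-1) c (fun j => grn a (x ((j:ℕ)+1)) * Fv), dif_pos (by omega : c < n-1)]
      have : c + 1 = (k:ℕ) := hc.symm
      rw [this]
  rw [hT1, hT2, hT3, Matrix.one_apply]
  -- positivity of mesh widths
  have hq1 : x (k:ℕ) < x ((k:ℕ)+1) := hmono (k:ℕ) (by omega)
  have hq2 : x ((k:ℕ)+1) < x ((k:ℕ)+2) := hmono ((k:ℕ)+1) (by omega)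
  have hne1 : x ((k:ℕ)+1) - x (k:ℕ) ≠ 0 := by linarith
  have hne2 : x ((k:ℕ)+2) - x ((k:ℕ)+1) ≠ 0 := by linarith
  rcases Nat.lt_trichotomy (k:ℕ) (i:ℕ) with h | h | h
  · -- k < i : all nodes ≤ a, result 0
    have g0 : grn a (x (k:ℕ)) = x (k:ℕ) * (1-a) :=
      grn_left (xmono_le n x hmono (k:ℕ) ((i:ℕ)+1) (by omega) (by omega)) ha1.le
    have g1 : grn a (x ((k:ℕ)+1)) = x ((k:ℕ)+1) * (1-a) :=
      grn_left (xmono_le n x hmono ((k:ℕ)+1) ((i:ℕ)+1) (by omega) (by omega)) ha1.le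
    have g2 : grn a (x ((k:ℕ)+2)) = x ((k:ℕ)+2) * (1-a) :=
      grn_left (xmono_le n x hmono ((k:ℕ)+2) ((i:ℕ)+1) (by omega) (by omega)) ha1.le
    rw [g0, g1, g2, if_neg (by intro e; rw [e] at h; omega), hD, hE, hF]
    field_simp
    ring
  · -- i = k : result 1
    have hq : x ((k:ℕ)+1) = a := by rw [ha, h]
    have g0 : grn a (x (k:ℕ)) = x (k:ℕ) * (1-a) :=
      grn_left (by rw [← hq]; exact hq1.le) ha1.le
    have g1 : grn a (x ((k:ℕ)+1)) = a * (1-a) := by rw [hq, grn_right le_rfl]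
    have g2 : grn a (x ((k:ℕ)+2)) = a * (1 - x ((k:ℕ)+2)) :=
      grn_right (by rw [← hq]; exact hq2.le)
    have hik' : i = k := Fin.ext h.symm
    rw [g0, g1, g2, if_pos hik', hD, hE, hF]
    rw [← hq]
    field_simp
    ring
  · -- i < k : all nodes ≥ a, result 0
    have g0 : grn a (x (k:ℕ)) = a * (1 - x (k:ℕ)) :=
      grn_right (xmono_le n x hmono ((i:ℕ)+1) (k:ℕ) (by omega) (by omega))
    have g1 : grn a (x ((k:ℕ)+1)) = a * (1 - x ((k:ℕ)+1)) :=
      grn_right (xmono_le n x hmono ((i:ℕ)+1) ((k:ℕ)+1) (by omega) (by omega))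
    have g2 : grn a (x ((k:ℕ)+2)) = a * (1 - x ((k:ℕ)+2)) :=
      grn_right (xmono_le n x hmono ((i:ℕ)+1) ((k:ℕ)+2) (by omega) (by omega))
    rw [g0, g1, g2, if_neg (by intro e; rw [e] at h; omega), hD, hE, hF]
    field_simp
    ring

lemma grn_eq_min (s t : ℝ) : grn s t = min (s*(1-t)) (t*(1-s)) := by
  unfold grn
  split_ifs with h
  · rw [min_eq_left (by nlinarith)]
  · rw [min_eq_right (by nlinarith [not_le.mp h])]

lemma grn_cont (s : ℝ) : Continuous (fun t => grn s t) := by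
  have : (fun t => grn s t) = fun t => min (s*(1-t)) (t*(1-s)) := funext (grn_eq_min s)
  rw [this]
  continuity

lemma grn_abs_le {s t : ℝ} (hs0 : 0 ≤ s) (hs1 : s ≤ 1) (ht0 : 0 ≤ t) (ht1 : t ≤ 1) :
    |grn s t| ≤ 1/4 := by
  unfold grn
  split_ifs with h
  · rw [abs_of_nonneg (by nlinarith)]
    nlinarith [sq_nonneg (2*s-1), mul_le_mul_of_nonneg_left h hs0]
  · have h' : t < s := not_le.mp h
    rw [abs_of_nonneg (by nlinarith)]
    nlinarith [sq_nonneg (2*t-1), mul_le_mul_of_nonneg_left h'.le ht0]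

lemma trapsum (m : ℕ) (x N : ℕ → ℝ) (hN0 : N 0 = 0) (hNn : N (m+1) = 0) :
    ∑ p ∈ Finset.range (m+1), (x (p+1) - x p) * (N p + N (p+1))/2
      = ∑ k ∈ Finset.range m, (x (k+2) - x k)/2 * N (k+1) := by
  have e : ∀ p, (x (p+1) - x p) * (N p + N (p+1))/2
      = ((x (p+1) - x p) * N p)/2 + ((x (p+1) - x p) * N (p+1))/2 := fun p => by ring
  rw [Finset.sum_congr rfl (fun p _ => e p), Finset.sum_add_distrib,
    Finset.sum_range_succ', Finset.sum_range_succ, hN0, hNn]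
  have : ∀ i ∈ Finset.range m,
      ((x (i+1+1) - x (i+1)) * N (i+1))/2 + ((x (i+1) - x i) * N (i+1))/2
        = (x (i+2) - x i)/2 * N (i+1) := fun i _ => by ring
  rw [mul_zero, zero_div, add_zero, mul_zero, zero_div, add_zero,
    ← Finset.sum_add_distrib, Finset.sum_congr rfl this]

theorem stmt5
    (n : ℕ) (hn : 2 ≤ n)
    (x : ℕ → ℝ) (hx0 : x 0 = 0) (hxn : x n = 1)
    (hmono : ∀ i, i < n → x i < x (i + 1))
    (f f' f'' : ℝ → ℝ)
    (hf1 : ∀ t ∈ Set.Icc (0:ℝ) 1, HasDerivWithinAt f (f' t) (Set.Icc 0 1) t)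
    (hf2 : ∀ t ∈ Set.Icc (0:ℝ) 1, HasDerivWithinAt f' (f'' t) (Set.Icc 0 1) t)
    (hf2c : ContinuousOn f'' (Set.Icc (0:ℝ) 1))
    (u u' u'' : ℝ → ℝ)
    (hu1 : ∀ t ∈ Set.Icc (0:ℝ) 1, HasDerivWithinAt u (u' t) (Set.Icc 0 1) t)
    (hu2 : ∀ t ∈ Set.Icc (0:ℝ) 1, HasDerivWithinAt u' (u'' t) (Set.Icc 0 1) t)
    (hu2c : ContinuousOn u'' (Set.Icc (0:ℝ) 1))
    (hode : ∀ t ∈ Set.Ioo (0:ℝ) 1, -u'' t = f t)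
    (hubc0 : u 0 = 0) (hubc1 : u 1 = 0)
    (uFD : Fin (n - 1) → ℝ)
    (huFD : (stiff n x).mulVec uFD =
      (weightMat n x).mulVec (fun j : Fin (n - 1) => f (x ((j : ℕ) + 1))))
    (H : ℝ)
    (hH : H = (Finset.Icc 1 n).sup'
      (Finset.nonempty_Icc.mpr (by omega)) (fun j => x j - x (j - 1))) :
    ∀ j : Fin (n - 1),
      |u (x ((j : ℕ) + 1)) - uFD j| ≤
        H ^ 2 / 48 *
          (4 * (⨆ t : Set.Icc (0:ℝ) 1, |f' t|) + ⨆ t : Set.Icc (0:ℝ) 1, |f'' t|) := by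
  
  intro j
  have hjn : (j : ℕ) < n - 1 := j.isLt
  set ja := (j : ℕ) + 1 with hja
  set a := x ja with haa
  have ha0 : 0 < a := by
    rw [haa, ← hx0]; exact xmono_lt n x hmono 0 ja (by omega) (by omega)
  have ha1 : a < 1 := by
    rw [haa, ← hxn]; exact xmono_lt n x hmono ja n (by omega) le_rfl
  have hxle : ∀ p q, p ≤ q → q ≤ n → x p ≤ x q := xmono_le n x hmono
  have hx01 : ∀ p, p ≤ n → 0 ≤ x p ∧ x p ≤ 1 := by
    intro p hp
    constructor
    · rw [← hx0]; exact hxle 0 p (by omega) hp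
    · rw [← hxn]; exact hxle p n hp le_rfl
  have hfc : ContinuousOn f (Set.Icc (0:ℝ) 1) := fun t ht => (hf1 t ht).continuousWithinAt
  have hf'c : ContinuousOn f' (Set.Icc (0:ℝ) 1) := fun t ht => (hf2 t ht).continuousWithinAt
  set F1 := ⨆ t : Set.Icc (0:ℝ) 1, |f' t| with hF1def
  set F2 := ⨆ t : Set.Icc (0:ℝ) 1, |f'' t| with hF2def
  have hb1 : BddAbove (Set.range fun t : Set.Icc (0:ℝ) 1 => |f' t|) := by
    have h := (isCompact_Icc.image_of_continuousOn hf'c.abs).bddAbove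
    rwa [Set.image_eq_range] at h
  have hb2 : BddAbove (Set.range fun t : Set.Icc (0:ℝ) 1 => |f'' t|) := by
    have h := (isCompact_Icc.image_of_continuousOn hf2c.abs).bddAbove
    rwa [Set.image_eq_range] at h
  have hF1 : ∀ t ∈ Set.Icc (0:ℝ) 1, |f' t| ≤ F1 :=
    fun t ht => le_ciSup hb1 (⟨t, ht⟩ : Set.Icc (0:ℝ) 1)
  have hF2 : ∀ t ∈ Set.Icc (0:ℝ) 1, |f'' t| ≤ F2 :=
    fun t ht => le_ciSup hb2 (⟨t, ht⟩ : Set.Icc (0:ℝ) 1)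
  have hF1nn : 0 ≤ F1 := le_trans (abs_nonneg _) (hF1 0 ⟨le_rfl, zero_le_one⟩)
  have hF2nn : 0 ≤ F2 := le_trans (abs_nonneg _) (hF2 0 ⟨le_rfl, zero_le_one⟩)
  -- Green's representation of u
  have hgreen : ∫ t in (0:ℝ)..1, grn a t * f t = u a :=
    green_rep f hfc u u' u'' hu1 hu2 hu2c hode hubc0 hubc1 a ⟨ha0, ha1⟩
  -- representation of uFD
  have hud2 : uFD j = ∑ k : Fin (n-1),
      grn a (x ((k:ℕ)+1)) * ((x ((k:ℕ)+2) - x (k:ℕ))/2 * f (x ((k:ℕ)+1))) := by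
    have hud : uFD = (Minv n x * stiff n x).mulVec uFD := by
      rw [Minv_mul_stiff n hn x hx0 hxn hmono, Matrix.one_mulVec]
    conv_lhs => rw [hud]
    rw [← Matrix.mulVec_mulVec, huFD]
    show dotProduct _ _ = _
    rw [dotProduct]
    apply Finset.sum_congr rfl
    intro k _
    rw [show (weightMat n x).mulVec (fun k : Fin (n-1) => f (x ((k:ℕ)+1))) k
        = (x ((k:ℕ)+2) - x (k:ℕ))/2 * f (x ((k:ℕ)+1)) from
      Matrix.mulVec_diagonal _ _ _]
    rfl
  -- nodal products
  set Nf : ℕ → ℝ := fun p => grn a (x p) * f (x p) with hNf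
  have hN0 : Nf 0 = 0 := by
    rw [hNf]
    simp only [hx0]
    rw [grn_left ha0.le ha1.le]
    ring
  have hNn : Nf n = 0 := by
    rw [hNf]
    simp only [hxn]
    rw [grn_right ha1.le]
    ring
  have hd : uFD j = ∑ p ∈ Finset.range n, (x (p+1) - x p) * (Nf p + Nf (p+1))/2 := by
    have hts := trapsum (n-1) x Nf hN0 (by rw [show n - 1 + 1 = n from by omega]; exact hNn)
    rw [show n - 1 + 1 = n from by omega] at hts
    rw [hud2, hts, Finset.sum_range]
    apply Finset.sum_congr rfl
    intro k _
    rw [hNf]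
    ring
  -- integrability on subintervals
  have hsub : ∀ p, p < n → Set.Icc (x p) (x (p+1)) ⊆ Set.Icc (0:ℝ) 1 :=
    fun p hp => Set.Icc_subset_Icc (hx01 p (by omega)).1 (hx01 (p+1) (by omega)).2
  have hint : ∀ p < n, IntervalIntegrable (fun t => grn a t * f t)
      MeasureTheory.volume (x p) (x (p+1)) := by
    intro p hp
    exact (((grn_cont a).continuousOn).mul (hfc.mono (hsub p hp))).intervalIntegrable_of_Icc
      (hmono p hp).le
  have hsplit : ∑ p ∈ Finset.range n, ∫ t in (x p)..(x (p+1)), grn a t * f t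
      = ∫ t in (0:ℝ)..1, grn a t * f t := by
    have := intervalIntegral.sum_integral_adjacent_intervals (a := x) (f := fun t => grn a t * f t)
      (μ := MeasureTheory.volume) hint
    rwa [hx0, hxn] at this
  -- slopes
  set mp : ℕ → ℝ := fun p => if p + 1 ≤ ja then 1 - a else -a with hmp
  set cp : ℕ → ℝ := fun p => if p + 1 ≤ ja then 0 else a with hcp
  have heq : ∀ p, p < n → ∀ t ∈ Set.Icc (x p) (x (p+1)), grn a t = cp p + mp p * t := by
    intro p hp t ht
    simp only [hmp, hcp]
    by_cases hc : p + 1 ≤ ja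
    · rw [if_pos hc, if_pos hc]
      have hta : t ≤ a := le_trans ht.2 (by rw [haa]; exact hxle (p+1) ja hc (by omega))
      rw [grn_left hta ha1.le]
      ring
    · rw [if_neg hc, if_neg hc]
      have hta : a ≤ t := le_trans (by rw [haa]; exact hxle ja p (by omega) (by omega)) ht.1
      rw [grn_right hta]
      ring
  -- per-interval error bound
  have key : ∀ p ∈ Finset.range n,
      |(∫ t in (x p)..(x (p+1)), grn a t * f t) - (x (p+1) - x p) * (Nf p + Nf (p+1))/2|
        ≤ (x (p+1) - x p)^3/12 * (2 * |mp p| * F1 + F2/4) := by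
    intro p hp'
    have hp : p < n := Finset.mem_range.mp hp'
    have hxp0 : 0 ≤ x p := (hx01 p (by omega)).1
    have hxp1 : x (p+1) ≤ 1 := (hx01 (p+1) (by omega)).2
    have hpq : x p ≤ x (p+1) := (hmono p hp).le
    have htrap := trap (x p) (x (p+1)) hxp0 hxp1 hpq (cp p) (mp p) f f' f'' hf1 hf2 hf2c
    have hsub' := hsub p hp
    have hintA : IntervalIntegrable
        (fun t => (t - x p)*(x (p+1) - t)/2 * ((cp p + mp p * t) * f'' t + 2 * mp p * f' t))
        MeasureTheory.volume (x p) (x (p+1)) := by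
      apply ContinuousOn.intervalIntegrable_of_Icc hpq
      apply ContinuousOn.mul (Continuous.continuousOn (((continuous_id.sub continuous_const).mul (continuous_const.sub continuous_id)).div_const 2))
      exact ((Continuous.continuousOn (continuous_const.add (continuous_const.mul continuous_id) : Continuous fun t : ℝ => cp p + mp p * t)).mul
        (hf2c.mono hsub')).add (continuousOn_const.mul (hf'c.mono hsub'))
    have hintB : IntervalIntegrable (fun t => (cp p + mp p * t) * f t)
        MeasureTheory.volume (x p) (x (p+1)) := by
      apply ContinuousOn.intervalIntegrable_of_Icc hpq
      exact (Continuous.continuousOn (continuous_const.add (continuous_const.mul continuous_id) : Continuous fun t : ℝ => cp p + mp p * t)).mul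
        (hfc.mono hsub')
    rw [intervalIntegral.integral_add hintA hintB] at htrap
    have hcongr : ∫ t in (x p)..(x (p+1)), grn a t * f t
        = ∫ t in (x p)..(x (p+1)), (cp p + mp p * t) * f t := by
      apply intervalIntegral.integral_congr
      intro t ht
      rw [Set.uIcc_of_le hpq] at ht
      show grn a t * f t = _
      rw [heq p hp t ht]
    have hend0 : grn a (x p) = cp p + mp p * x p :=
      heq p hp (x p) ⟨le_rfl, hpq⟩
    have hend1 : grn a (x (p+1)) = cp p + mp p * x (p+1) :=
      heq p hp (x (p+1)) ⟨hpq, le_rfl⟩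
    have hNfp : (x (p+1) - x p) * (Nf p + Nf (p+1))/2
        = (x (p+1) - x p) * ((cp p + mp p * x p) * f (x p)
            + (cp p + mp p * x (p+1)) * f (x (p+1)))/2 := by
      rw [hNf]
      simp only [hend0, hend1]
    rw [hcongr, hNfp, ← htrap]
    have : (∫ t in (x p)..(x (p+1)), (cp p + mp p * t) * f t)
        - ((∫ t in (x p)..(x (p+1)),
            (t - x p)*(x (p+1) - t)/2 * ((cp p + mp p * t) * f'' t + 2 * mp p * f' t))
          + ∫ t in (x p)..(x (p+1)), (cp p + mp p * t) * f t)
        = -(∫ t in (x p)..(x (p+1)),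
            (t - x p)*(x (p+1) - t)/2 * ((cp p + mp p * t) * f'' t + 2 * mp p * f' t)) := by
      ring
    rw [this, abs_neg]
    apply piece_bound (x p) (x (p+1)) hxp0 hxp1 hpq (cp p) (mp p) F1 F2 f' f'' hf'c hf2c
      _ hF1 hF2
    intro t ht
    rw [← heq p hp t ht]
    exact grn_abs_le ha0.le ha1.le (le_trans hxp0 ht.1) (le_trans ht.2 hxp1)
  -- mesh size facts
  have hHp : ∀ p, p < n → x (p+1) - x p ≤ H := by
    intro p hp
    rw [hH]
    have hmem : p + 1 ∈ Finset.Icc 1 n := Finset.mem_Icc.mpr ⟨by omega, by omega⟩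
    have := Finset.le_sup' (f := fun q => x q - x (q-1)) hmem
    exact this
  have hsum1 : ∑ p ∈ Finset.range n, (x (p+1) - x p) = 1 := by
    rw [Finset.sum_range_sub (f := x), hx0, hxn]
    ring
  have hsum2 : ∑ p ∈ Finset.range n, (x (p+1) - x p) * |mp p| = 2*a*(1-a) := by
    rw [Finset.range_eq_Ico, ← Finset.sum_Ico_consecutive _ (Nat.zero_le ja) (by omega : ja ≤ n)]
    have hL : ∑ p ∈ Finset.Ico 0 ja, (x (p+1) - x p) * |mp p|
        = (∑ p ∈ Finset.Ico 0 ja, (x (p+1) - x p)) * (1-a) := by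
      rw [Finset.sum_mul]
      apply Finset.sum_congr rfl
      intro p hp
      have : p + 1 ≤ ja := by have := (Finset.mem_Ico.mp hp).2; omega
      rw [hmp]
      simp only [if_pos this]
      rw [abs_of_nonneg (by linarith)]
    have hR : ∑ p ∈ Finset.Ico ja n, (x (p+1) - x p) * |mp p|
        = (∑ p ∈ Finset.Ico ja n, (x (p+1) - x p)) * a := by
      rw [Finset.sum_mul]
      apply Finset.sum_congr rfl
      intro p hp
      have : ¬ (p + 1 ≤ ja) := by have := (Finset.mem_Ico.mp hp).1; omega
      rw [hmp]
      simp only [if_neg this]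
      rw [abs_of_nonpos (by linarith), neg_neg]
    have hT1 : ∑ p ∈ Finset.Ico 0 ja, (x (p+1) - x p) = a := by
      rw [← Finset.range_eq_Ico, Finset.sum_range_sub (f := x), hx0, haa]
      ring
    have hT2 : ∑ p ∈ Finset.Ico ja n, (x (p+1) - x p) = 1 - a := by
      rw [Finset.sum_Ico_eq_sub _ (by omega : ja ≤ n),
        Finset.sum_range_sub (f := x), Finset.sum_range_sub (f := x), hx0, hxn, haa]
      ring
    rw [hL, hR, hT1, hT2]
    ring
  -- put everything together
  rw [← hgreen, hd, ← hsplit, ← Finset.sum_sub_distrib]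
  calc |∑ p ∈ Finset.range n, ((∫ t in (x p)..(x (p+1)), grn a t * f t)
          - (x (p+1) - x p) * (Nf p + Nf (p+1))/2)|
      ≤ ∑ p ∈ Finset.range n, |(∫ t in (x p)..(x (p+1)), grn a t * f t)
          - (x (p+1) - x p) * (Nf p + Nf (p+1))/2| := Finset.abs_sum_le_sum_abs _ _
    _ ≤ ∑ p ∈ Finset.range n, (x (p+1) - x p)^3/12 * (2 * |mp p| * F1 + F2/4) :=
        Finset.sum_le_sum key
    _ ≤ ∑ p ∈ Finset.range n, (H^2*F1/6 * ((x (p+1) - x p) * |mp p|)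
          + H^2*F2/48 * (x (p+1) - x p)) := by
        apply Finset.sum_le_sum
        intro p hp'
        have hp : p < n := Finset.mem_range.mp hp'
        have h0 : 0 ≤ x (p+1) - x p := by linarith [hmono p hp]
        have hh : x (p+1) - x p ≤ H := hHp p hp
        have e0 : (x (p+1) - x p)^2 ≤ H^2 := by nlinarith
        have e1 : (x (p+1) - x p)^3 ≤ H^2 * (x (p+1) - x p) := by
          nlinarith [mul_le_mul_of_nonneg_right e0 h0]
        have hC : 0 ≤ 2 * |mp p| * F1 + F2/4 := by positivity
        have := mul_le_mul_of_nonneg_right e1 hC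
        calc (x (p+1) - x p)^3/12 * (2 * |mp p| * F1 + F2/4)
            ≤ H^2 * (x (p+1) - x p)/12 * (2 * |mp p| * F1 + F2/4) := by linarith
          _ = H^2*F1/6 * ((x (p+1) - x p) * |mp p|) + H^2*F2/48 * (x (p+1) - x p) := by ring
    _ = H^2*F1/6 * (2*a*(1-a)) + H^2*F2/48 * 1 := by
        rw [Finset.sum_add_distrib, ← Finset.mul_sum, ← Finset.mul_sum, hsum1, hsum2]
    _ ≤ H^2/48 * (4*F1 + F2) := by
        nlinarith [mul_nonneg (mul_nonneg (sq_nonneg H) hF1nn) (sq_nonneg (2*a-1))]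
end

section
/- Let u ∈ C²([0,1]) satisfy −u''(x) = f(x) for all x ∈ (0,1) with u(0) = u(1) = 0, where f : [0,1] → ℝ is continuous. Then for every j with 1 ≤ j ≤ n−1, u(x_j) = Σ_{i=1}^{n−1} G(x_j, x_i) · ∫₀¹ f(x)φ_i(x) dx. -/
open MeasureTheory

open intervalIntegral

lemma ftc_left (u u' u'' : ℝ → ℝ)
    (hu1 : ∀ t ∈ Set.Icc (0:ℝ) 1, HasDerivWithinAt u (u' t) (Set.Icc 0 1) t)
    (hu2 : ∀ t ∈ Set.Icc (0:ℝ) 1, HasDerivWithinAt u' (u'' t) (Set.Icc 0 1) t)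
    (hu2c : ContinuousOn u'' (Set.Icc (0:ℝ) 1))
    (c m : ℝ) (h0 : 0 ≤ c) (hcm : c < m) (hm1 : m ≤ 1) :
    ∫ t in c..m, -u'' t * ((t - c) / (m - c)) = -u' m + (u m - u c) / (m - c) := by
  have hsub : Set.Icc c m ⊆ Set.Icc (0:ℝ) 1 :=
    Set.Icc_subset_Icc h0 hm1
  have hne : m - c ≠ 0 := sub_ne_zero.mpr hcm.ne'
  set F : ℝ → ℝ := fun t => -u' t * ((t - c) / (m - c)) + u t * (m - c)⁻¹ with hF
  have hderiv : ∀ t ∈ Set.Icc (0:ℝ) 1,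
      HasDerivWithinAt F (-u'' t * ((t - c) / (m - c))) (Set.Icc 0 1) t := by
    intro t ht
    have h1 : HasDerivWithinAt (fun s => (s - c) / (m - c)) ((m - c)⁻¹) (Set.Icc 0 1) t :=
      (((hasDerivAt_id t).sub_const c).div_const (m - c)).hasDerivWithinAt.congr_deriv (by simp)
    have h2 := ((hu2 t ht).neg.mul h1).add (((hu1 t ht)).mul_const ((m - c)⁻¹))
    refine h2.congr_deriv ?_
    simp only [Pi.neg_apply]
    ring
  have hcu : ContinuousOn u (Set.Icc (0:ℝ) 1) := fun t ht => (hu1 t ht).continuousWithinAt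
  have hcu' : ContinuousOn u' (Set.Icc (0:ℝ) 1) := fun t ht => (hu2 t ht).continuousWithinAt
  have hFc : ContinuousOn F (Set.Icc c m) := by
    apply ContinuousOn.add
    · exact ((hcu'.mono hsub).neg.mul ((continuousOn_id.sub continuousOn_const).div_const _))
    · exact (hcu.mono hsub).mul continuousOn_const
  have hint : IntervalIntegrable (fun t => -u'' t * ((t - c) / (m - c))) volume c m := by
    apply ContinuousOn.intervalIntegrable
    rw [Set.uIcc_of_le hcm.le]
    exact ((hu2c.mono hsub).neg.mul ((continuousOn_id.sub continuousOn_const).div_const _))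
  have := integral_eq_sub_of_hasDeriv_right_of_le hcm.le hFc
    (fun t ht => by
      have ht' : t ∈ Set.Ioo (0:ℝ) 1 := ⟨lt_of_le_of_lt h0 ht.1, lt_of_lt_of_le ht.2 hm1⟩
      have : HasDerivAt F (-u'' t * ((t - c) / (m - c))) t :=
        (hderiv t (Set.Ioo_subset_Icc_self ht')).hasDerivAt
          (Icc_mem_nhds ht'.1 ht'.2)
      exact this.hasDerivWithinAt) hint
  rw [this, hF]
  simp only
  rw [div_self hne]
  field_simp
  ring

lemma ftc_right (u u' u'' : ℝ → ℝ)
    (hu1 : ∀ t ∈ Set.Icc (0:ℝ) 1, HasDerivWithinAt u (u' t) (Set.Icc 0 1) t)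
    (hu2 : ∀ t ∈ Set.Icc (0:ℝ) 1, HasDerivWithinAt u' (u'' t) (Set.Icc 0 1) t)
    (hu2c : ContinuousOn u'' (Set.Icc (0:ℝ) 1))
    (m d : ℝ) (h0 : 0 ≤ m) (hmd : m < d) (hd1 : d ≤ 1) :
    ∫ t in m..d, -u'' t * ((d - t) / (d - m)) = u' m - (u d - u m) / (d - m) := by
  have hsub : Set.Icc m d ⊆ Set.Icc (0:ℝ) 1 := Set.Icc_subset_Icc h0 hd1
  have hne : d - m ≠ 0 := sub_ne_zero.mpr hmd.ne'
  set F : ℝ → ℝ := fun t => -u' t * ((d - t) / (d - m)) - u t * (d - m)⁻¹ with hF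
  have hderiv : ∀ t ∈ Set.Icc (0:ℝ) 1,
      HasDerivWithinAt F (-u'' t * ((d - t) / (d - m))) (Set.Icc 0 1) t := by
    intro t ht
    have h1 : HasDerivWithinAt (fun s => (d - s) / (d - m)) (-(d - m)⁻¹) (Set.Icc 0 1) t :=
      (((hasDerivAt_id t).const_sub d).div_const (d - m)).hasDerivWithinAt.congr_deriv (by simp [neg_div])
    have h2 := ((hu2 t ht).neg.mul h1).sub (((hu1 t ht)).mul_const ((d - m)⁻¹))
    refine h2.congr_deriv ?_
    simp only [Pi.neg_apply]
    ring
  have hcu : ContinuousOn u (Set.Icc (0:ℝ) 1) := fun t ht => (hu1 t ht).continuousWithinAt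
  have hcu' : ContinuousOn u' (Set.Icc (0:ℝ) 1) := fun t ht => (hu2 t ht).continuousWithinAt
  have hFc : ContinuousOn F (Set.Icc m d) := by
    apply ContinuousOn.sub
    · exact ((hcu'.mono hsub).neg.mul ((continuousOn_const.sub continuousOn_id).div_const _))
    · exact (hcu.mono hsub).mul continuousOn_const
  have hint : IntervalIntegrable (fun t => -u'' t * ((d - t) / (d - m))) volume m d := by
    apply ContinuousOn.intervalIntegrable
    rw [Set.uIcc_of_le hmd.le]
    exact ((hu2c.mono hsub).neg.mul ((continuousOn_const.sub continuousOn_id).div_const _))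
  have := integral_eq_sub_of_hasDeriv_right_of_le hmd.le hFc
    (fun t ht => by
      have ht' : t ∈ Set.Ioo (0:ℝ) 1 := ⟨lt_of_le_of_lt h0 ht.1, lt_of_lt_of_le ht.2 hd1⟩
      exact ((hderiv t (Set.Ioo_subset_Icc_self ht')).hasDerivAt
          (Icc_mem_nhds ht'.1 ht'.2)).hasDerivWithinAt) hint
  rw [this, hF]
  simp only
  rw [div_self hne]
  field_simp
  ring

lemma integral_hat (n : ℕ) (x : ℕ → ℝ) (hx0 : x 0 = 0) (hxn : x n = 1)
    (hlt : ∀ a b, a < b → b ≤ n → x a < x b)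
    (u u' u'' f : ℝ → ℝ)
    (hu1 : ∀ t ∈ Set.Icc (0:ℝ) 1, HasDerivWithinAt u (u' t) (Set.Icc 0 1) t)
    (hu2 : ∀ t ∈ Set.Icc (0:ℝ) 1, HasDerivWithinAt u' (u'' t) (Set.Icc 0 1) t)
    (hu2c : ContinuousOn u'' (Set.Icc (0:ℝ) 1))
    (hf : ContinuousOn f (Set.Icc (0:ℝ) 1))
    (hode : ∀ t ∈ Set.Ioo (0:ℝ) 1, -u'' t = f t)
    (i : ℕ) (hi1 : 1 ≤ i) (hi2 : i + 1 ≤ n) :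
    ∫ t in (0:ℝ)..1, f t * hatFn x i t
      = (u (x i) - u (x (i - 1))) / (x i - x (i - 1))
        - (u (x (i + 1)) - u (x i)) / (x (i + 1) - x i) := by
  have hle : ∀ a b, a ≤ b → b ≤ n → x a ≤ x b := by
    intro a b hab hbn
    rcases eq_or_lt_of_le hab with h | h
    · rw [h]
    · exact (hlt a b h hbn).le
  set c := x (i - 1) with hc
  set m := x i with hm
  set d := x (i + 1) with hd
  have hcm : c < m := by
    have := hlt (i - 1) i (by omega) (by omega); exact this
  have hmd : m < d := hlt i (i + 1) (by omega) hi2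
  have hc0 : 0 ≤ c := by rw [← hx0]; exact hle 0 (i - 1) (by omega) (by omega)
  have hd1 : d ≤ 1 := by rw [← hxn]; exact hle (i + 1) n hi2 le_rfl
  have hm0 : 0 < m := lt_of_le_of_lt hc0 hcm
  have hm1 : m < 1 := lt_of_lt_of_le hmd hd1
  have hnc : m - c ≠ 0 := sub_ne_zero.mpr hcm.ne'
  have hnd : d - m ≠ 0 := sub_ne_zero.mpr hmd.ne'
  -- hat fn values
  have hhat1 : ∀ t ∈ Set.Ioc (0:ℝ) c, hatFn x i t = 0 := by
    intro t ht
    rcases eq_or_lt_of_le ht.2 with h | h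
    · simp [hatFn, ← hc, ← hm, h, hcm.le]
    · have h1 : ¬ (c ≤ t) := not_le.mpr h
      have h2 : ¬ (m ≤ t) := not_le.mpr (h.trans hcm)
      simp [hatFn, ← hc, ← hm, h1, h2]
  have hhat2 : ∀ t ∈ Set.Ioc c m, hatFn x i t = (t - c) / (m - c) := by
    intro t ht
    simp [hatFn, ← hc, ← hm, ht.1.le, ht.2]
  have hhat3 : ∀ t ∈ Set.Ioc m d, hatFn x i t = (d - t) / (d - m) := by
    intro t ht
    simp [hatFn, ← hc, ← hm, ← hd, ht.1.not_ge, ht.1.le, ht.2]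
  have hhat4 : ∀ t ∈ Set.Ioc d 1, hatFn x i t = 0 := by
    intro t ht
    have h1 : ¬ (t ≤ m) := not_le.mpr (hmd.trans ht.1)
    have h2 : ¬ (t ≤ d) := not_le.mpr ht.1
    simp [hatFn, ← hc, ← hm, ← hd, h1, h2]
  -- pointwise identities for the integrands
  have heq1 : ∀ t ∈ Set.Ioc (0:ℝ) c, f t * hatFn x i t = 0 := fun t ht => by
    rw [hhat1 t ht, mul_zero]
  have heq2 : ∀ t ∈ Set.Ioc c m, f t * hatFn x i t = -u'' t * ((t - c) / (m - c)) := by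
    intro t ht
    rw [hhat2 t ht, ← hode t ⟨lt_of_le_of_lt hc0 ht.1, lt_of_le_of_lt ht.2 hm1⟩]
  have heq3 : ∀ t ∈ Set.Ioc m d, f t * hatFn x i t = -u'' t * ((d - t) / (d - m)) := by
    intro t ht
    rcases lt_or_eq_of_le (ht.2.trans hd1) with h | h
    · rw [hhat3 t ht, ← hode t ⟨hm0.trans ht.1, h⟩]
    · have hde : d = 1 := le_antisymm hd1 (h ▸ ht.2)
      rw [hhat3 t ht, hde, h]
      simp
  have heq4 : ∀ t ∈ Set.Ioc d 1, f t * hatFn x i t = 0 := fun t ht => by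
    rw [hhat4 t ht, mul_zero]
  -- integrability of each piece
  have hfm : ContinuousOn f (Set.Icc c m) := hf.mono (Set.Icc_subset_Icc hc0 hm1.le)
  have hfd : ContinuousOn f (Set.Icc m d) := hf.mono (Set.Icc_subset_Icc hm0.le hd1)
  have int1 : IntervalIntegrable (fun t => f t * hatFn x i t) volume 0 c := by
    refine (_root_.intervalIntegrable_const (c := (0:ℝ))).congr ?_
    intro t ht
    rw [Set.uIoc_of_le hc0] at ht
    exact (heq1 t ht).symm
  have int2 : IntervalIntegrable (fun t => f t * hatFn x i t) volume c m := by
    refine (ContinuousOn.intervalIntegrable (u := fun t => f t * ((t - c) / (m - c))) ?_).congr ?_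
    · rw [Set.uIcc_of_le hcm.le]
      exact hfm.mul ((continuousOn_id.sub continuousOn_const).div_const _)
    · intro t ht
      rw [Set.uIoc_of_le hcm.le] at ht
      beta_reduce
      rw [hhat2 t ht]
  have int3 : IntervalIntegrable (fun t => f t * hatFn x i t) volume m d := by
    refine (ContinuousOn.intervalIntegrable (u := fun t => f t * ((d - t) / (d - m))) ?_).congr ?_
    · rw [Set.uIcc_of_le hmd.le]
      exact hfd.mul ((continuousOn_const.sub continuousOn_id).div_const _)
    · intro t ht
      rw [Set.uIoc_of_le hmd.le] at ht
      beta_reduce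
      rw [hhat3 t ht]
  have int4 : IntervalIntegrable (fun t => f t * hatFn x i t) volume d 1 := by
    refine (_root_.intervalIntegrable_const (c := (0:ℝ))).congr ?_
    intro t ht
    rw [Set.uIoc_of_le hd1] at ht
    exact (heq4 t ht).symm
  -- split the integral
  have hsplit : ∫ t in (0:ℝ)..1, f t * hatFn x i t
      = ((∫ t in (0:ℝ)..c, f t * hatFn x i t) + ∫ t in c..m, f t * hatFn x i t)
        + (∫ t in m..d, f t * hatFn x i t) + ∫ t in d..1, f t * hatFn x i t := by
    rw [integral_add_adjacent_intervals int1 int2,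
      integral_add_adjacent_intervals (int1.trans int2) int3,
      integral_add_adjacent_intervals ((int1.trans int2).trans int3) int4]
  -- evaluate each piece
  have E1 : ∫ t in (0:ℝ)..c, f t * hatFn x i t = 0 := by
    rw [integral_congr_ae (ae_of_all _ fun t ht =>
      heq1 t (Set.uIoc_of_le hc0 ▸ ht))]; simp
  have E4 : ∫ t in d..(1:ℝ), f t * hatFn x i t = 0 := by
    rw [integral_congr_ae (ae_of_all _ fun t ht =>
      heq4 t (Set.uIoc_of_le hd1 ▸ ht))]; simp
  have E2 : ∫ t in c..m, f t * hatFn x i t = -u' m + (u m - u c) / (m - c) := by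
    rw [integral_congr_ae (ae_of_all _ fun t ht =>
      heq2 t (Set.uIoc_of_le hcm.le ▸ ht))]
    exact ftc_left u u' u'' hu1 hu2 hu2c c m hc0 hcm hm1.le
  have E3 : ∫ t in m..d, f t * hatFn x i t = u' m - (u d - u m) / (d - m) := by
    rw [integral_congr_ae (ae_of_all _ fun t ht =>
      heq3 t (Set.uIoc_of_le hmd.le ▸ ht))]
    exact ftc_right u u' u'' hu1 hu2 hu2c m d hm0.le hmd hd1
  rw [hsplit, E1, E2, E3, E4]
  ring

theorem stmt8
    (n : ℕ) (hn : 2 ≤ n)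
    (x : ℕ → ℝ) (hx0 : x 0 = 0) (hxn : x n = 1)
    (hmono : ∀ i, i < n → x i < x (i + 1))
    (u u' u'' f : ℝ → ℝ)
    (hu1 : ∀ t ∈ Set.Icc (0:ℝ) 1, HasDerivWithinAt u (u' t) (Set.Icc 0 1) t)
    (hu2 : ∀ t ∈ Set.Icc (0:ℝ) 1, HasDerivWithinAt u' (u'' t) (Set.Icc 0 1) t)
    (hu2c : ContinuousOn u'' (Set.Icc (0:ℝ) 1))
    (hf : ContinuousOn f (Set.Icc (0:ℝ) 1))
    (hode : ∀ t ∈ Set.Ioo (0:ℝ) 1, -u'' t = f t)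
    (hubc0 : u 0 = 0) (hubc1 : u 1 = 0) :
    ∀ j, 1 ≤ j → j ≤ n - 1 →
      u (x j) = ∑ i : Fin (n - 1),
        greenFn (x j) (x ((i : ℕ) + 1)) *
          ∫ t in (0:ℝ)..1, f t * hatFn x ((i : ℕ) + 1) t := by
  obtain ⟨m, rfl⟩ : ∃ m, n = m + 1 := ⟨n - 1, by omega⟩
  intro j hj1 hj2
  have hjm : j ≤ m := by omega
  have hjn : j < m + 1 := by omega
  have hlt : ∀ a b, a < b → b ≤ m + 1 → x a < x b := by
    intro a b hab hbn
    induction b with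
    | zero => omega
    | succ k ih =>
      rcases Nat.lt_succ_iff_lt_or_eq.mp hab with h | h
      · exact (ih h (by omega)).trans (hmono k (by omega))
      · subst h; exact hmono a (by omega)
  have hle : ∀ a b, a ≤ b → b ≤ m + 1 → x a ≤ x b := by
    intro a b hab hbn
    rcases eq_or_lt_of_le hab with h | h
    · rw [h]
    · exact (hlt a b h hbn).le
  have hxj0 : 0 ≤ x j := by rw [← hx0]; exact hle 0 j (by omega) (by omega)
  have hxj1 : x j < 1 := by rw [← hxn]; exact hlt j (m + 1) hjn le_rfl
  set g : ℕ → ℝ := fun i => greenFn (x j) (x i) with hg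
  set D : ℕ → ℝ := fun i => (u (x (i + 1)) - u (x i)) / (x (i + 1) - x i) with hD
  have hg0 : g 0 = 0 := by simp [hg, greenFn, hx0, hxj0]
  have hgn : g (m + 1) = 0 := by
    simp [hg, greenFn, hxn, not_le.mpr hxj1]
  rw [show (∑ i : Fin (m + 1 - 1), greenFn (x j) (x ((i : ℕ) + 1)) *
        ∫ t in (0:ℝ)..1, f t * hatFn x ((i : ℕ) + 1) t)
      = ∑ i ∈ Finset.range m, greenFn (x j) (x (i + 1)) *
        ∫ t in (0:ℝ)..1, f t * hatFn x (i + 1) t from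
    Fin.sum_univ_eq_sum_range
      (fun i => greenFn (x j) (x (i + 1)) * ∫ t in (0:ℝ)..1, f t * hatFn x (i + 1) t) m]
  have hrw : ∀ i ∈ Finset.range m,
      greenFn (x j) (x (i + 1)) * ∫ t in (0:ℝ)..1, f t * hatFn x (i + 1) t
        = g (i + 1) * (D i - D (i + 1)) := by
    intro i hi
    rw [Finset.mem_range] at hi
    rw [integral_hat (m + 1) x hx0 hxn hlt u u' u'' f hu1 hu2 hu2c hf hode (i + 1)
      (by omega) (by omega)]
    simp only [hg, hD, Nat.add_sub_cancel]
  rw [Finset.sum_congr rfl hrw]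
  have habel : ∑ i ∈ Finset.range m, g (i + 1) * (D i - D (i + 1))
      = ∑ i ∈ Finset.range (m + 1), (g (i + 1) - g i) * D i := by
    have h1 : ∑ i ∈ Finset.range (m + 1), (g (i + 1) - g i) * D i
        = ∑ i ∈ Finset.range (m + 1), g (i + 1) * D i
          - ∑ i ∈ Finset.range (m + 1), g i * D i := by
      rw [← Finset.sum_sub_distrib]
      exact Finset.sum_congr rfl fun i _ => by ring
    rw [h1, Finset.sum_range_succ (fun i => g (i + 1) * D i) m,
      Finset.sum_range_succ' (fun i => g i * D i) m, hgn, hg0]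
    simp only [zero_mul, add_zero]
    rw [← Finset.sum_sub_distrib]
    exact Finset.sum_congr rfl fun i _ => by ring
  rw [habel]
  have hterm : ∀ i ∈ Finset.range (m + 1),
      (g (i + 1) - g i) * D i
        = (if i < j then (1 - x j) else -(x j)) * (u (x (i + 1)) - u (x i)) := by
    intro i hi
    rw [Finset.mem_range] at hi
    have hne : x (i + 1) - x i ≠ 0 :=
      sub_ne_zero.mpr (hlt i (i + 1) (lt_add_one i) (by omega)).ne'
    by_cases h : i < j
    · rw [if_pos h]
      have hgi : g i = x i * (1 - x j) := by
        simp only [hg, greenFn, if_pos (hle i j (by omega) (by omega))]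
      have hgi1 : g (i + 1) = x (i + 1) * (1 - x j) := by
        simp only [hg, greenFn, if_pos (hle (i + 1) j (by omega) (by omega))]
      rw [hgi, hgi1, hD]
      field_simp
    · rw [if_neg h]
      have key : ∀ k, j ≤ k → k ≤ m + 1 → g k = x j * (1 - x k) := by
        intro k hk hkn
        rcases eq_or_lt_of_le hk with h' | h'
        · subst h'
          simp [hg, greenFn]
        · simp only [hg, greenFn, if_neg (not_le.mpr (hlt j k h' hkn))]
      rw [key i (by omega) (by omega), key (i + 1) (by omega) (by omega), hD]
      field_simp
      ring
  rw [Finset.sum_congr rfl hterm, ← Finset.sum_range_add_sum_Ico _ (by omega : j ≤ m + 1)]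
  have hv0 : u (x 0) = 0 := by rw [hx0, hubc0]
  have hvn : u (x (m + 1)) = 0 := by rw [hxn, hubc1]
  have hpart1 : ∑ i ∈ Finset.range j,
      (if i < j then (1 - x j) else -(x j)) * (u (x (i + 1)) - u (x i))
        = (1 - x j) * u (x j) := by
    rw [Finset.sum_congr rfl (fun i hi => by rw [if_pos (Finset.mem_range.mp hi)]),
      ← Finset.mul_sum, Finset.sum_range_sub (fun i => u (x i)) j, hv0, sub_zero]
  have htel : ∑ i ∈ Finset.Ico j (m + 1), (u (x (i + 1)) - u (x i))
      = u (x (m + 1)) - u (x j) := by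
    have h1 := Finset.sum_range_add_sum_Ico (fun i => u (x (i + 1)) - u (x i))
      (by omega : j ≤ m + 1)
    have h2 := Finset.sum_range_sub (fun i => u (x i)) (m + 1)
    have h3 := Finset.sum_range_sub (fun i => u (x i)) j
    linarith
  have hpart2 : ∑ i ∈ Finset.Ico j (m + 1),
      (if i < j then (1 - x j) else -(x j)) * (u (x (i + 1)) - u (x i))
        = -(x j) * (u (x (m + 1)) - u (x j)) := by
    rw [Finset.sum_congr rfl
      (fun i hi => by rw [if_neg (not_lt.mpr (Finset.mem_Ico.mp hi).1)]),
      ← Finset.mul_sum, htel]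
  rw [hpart1, hpart2, hvn]
  ring
end

section
/- Let f : [0,1] → ℝ be continuous and f̃ = (f(x_1), …, f(x_{n−1}))ᵀ. Then for every j with 1 ≤ j ≤ n−1, the j-th component of G̃ W f̃ satisfies (G̃ W f̃)_j = x_j(1−x_j)·T_n(φ_{x_j}·f), where T_n is the composite trapezoid rule on the nodes x_0, …, x_n. -/
/-- The scaled Green function `φ_s(x) = x/s` for `x ≤ s` and `(1-x)/(1-s)` for `x > s`. -/
noncomputable def phiS (s : ℝ) : ℝ → ℝ := fun t =>
  if t ≤ s then t / s else (1 - t) / (1 - s)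

/-- The composite trapezoid rule on the nodes `x_0, …, x_n` for a function `θ` with
`θ(0) = θ(1) = 0`: `T_n(θ) = Σ_{i=1}^{n-1} θ(x_i) (h_i + h_{i+1})/2`. -/
noncomputable def ctr (n : ℕ) (x : ℕ → ℝ) (θ : ℝ → ℝ) : ℝ :=
  ∑ i : Fin (n - 1), θ (x ((i : ℕ) + 1)) * ((x ((i : ℕ) + 2) - x (i : ℕ)) / 2)

theorem stmt9
    (n : ℕ) (hn : 2 ≤ n)
    (x : ℕ → ℝ) (hx0 : x 0 = 0) (hxn : x n = 1)
    (hmono : ∀ i, i < n → x i < x (i + 1))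
    (f : ℝ → ℝ) (hf : ContinuousOn f (Set.Icc (0:ℝ) 1)) :
    ∀ j : Fin (n - 1),
      (greenMat n x * weightMat n x).mulVec
          (fun i : Fin (n - 1) => f (x ((i : ℕ) + 1))) j =
        x ((j : ℕ) + 1) * (1 - x ((j : ℕ) + 1)) *
          ctr n x (fun t => phiS (x ((j : ℕ) + 1)) t * f t) := by
  intro j
  have key : ∀ a b : ℕ, a < b → b ≤ n → x a < x b := by
    intro a b hab hbn
    induction b with
    | zero => omega
    | succ b ih =>
      rcases Nat.lt_succ_iff_lt_or_eq.mp hab with h | h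
      · exact (ih h (by omega)).trans (hmono b (by omega))
      · subst h; exact hmono a (by omega)
  have hj1 : (j : ℕ) + 1 < n := by have := j.2; omega
  set a := x ((j : ℕ) + 1) with ha
  have ha0 : 0 < a := hx0 ▸ key 0 ((j : ℕ) + 1) (by omega) (by omega)
  have ha1 : a < 1 := hxn ▸ key ((j : ℕ) + 1) n hj1 le_rfl
  simp only [Matrix.mulVec, dotProduct, Matrix.mul_diagonal, ctr, greenMat,
    weightMat, Finset.mul_sum]
  refine Finset.sum_congr rfl fun k _ => ?_
  set s := x ((k : ℕ) + 1)
  show greenFn a s * _ * f s = a * (1 - a) * (phiS a s * f s * _)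
  unfold greenFn phiS
  have hne0 : a ≠ 0 := ha0.ne'
  have hne1 : (1:ℝ) - a ≠ 0 := by linarith
  split
  · field_simp
  · field_simp
end
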